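/- arXiv:0704.1859 — 5 statements merged into one kernel-verified Lean document; each statement's English description precedes it below -/
import Mathlib

section
/- Let 1 < p < 2 and p′ = p/(p−1). Let f = Σ_{n=0}^∞ f_n χ_n be a radial function on the free group F with f_n ≥ 0. If λ(f) is of weak type (p,p), i.e. there is a constant C such that t · (#{x ∈ F : (f∗g)(x) > t})^{1/p} ≤ C · ‖g‖_p for every finitely supported g : F → [0,∞) and every t > 0, then Σ_{n=0}^∞ f_n^{p′} q^{n p′/p} < ∞; moreover there is a constant c = c(p, q) > 0 with c · (Σ_{n=0}^∞ f_n^{p′} q^{n p′/p})^{1/p′} ≤ C. (Equivalently, c ‖f‖_{(p,p′)} ≤ ‖λ(f)‖_{p→(p,∞)}.) -/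
open scoped ENNReal

noncomputable section

/-- Word length on the free group: the number of letters of the reduced word. -/
def wlen {α : Type*} [DecidableEq α] (x : FreeGroup α) : ℕ := x.toWord.length

/-- Convolution of real-valued functions on a group:
`(f ∗ g)(x) = Σ_y f(y) g(y⁻¹ x)`. -/
def convR {G : Type*} [Group G] (f g : G → ℝ) (x : G) : ℝ :=
  ∑' y, f y * g (y⁻¹ * x)

namespace RWT

open FreeGroup List

variable {α : Type*} [DecidableEq α]

/-- The no-cancellation relation on letters. -/
def NC (a b : α × Bool) : Prop := ¬(a.1 = b.1 ∧ a.2 = !b.2)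

theorem NC_iff {c l : α × Bool} : NC c l ↔ l ≠ (c.1, !c.2) := by
  rcases c with ⟨c1, c2⟩; rcases l with ⟨l1, l2⟩
  simp only [NC, Prod.mk.injEq, ne_eq, not_and]
  cases c2 <;> cases l2 <;> simp <;> tauto

theorem reduce_eq_self_of_chain' : ∀ {w : List (α × Bool)}, w.Chain' NC → reduce w = w
  | [], _ => rfl
  | [x], _ => rfl
  | x :: y :: l, h => by
    change List.IsChain NC _ at h
    rw [isChain_cons_cons] at h
    have ih := reduce_eq_self_of_chain' h.2
    rw [reduce.cons, ih]
    exact if_neg h.1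

theorem chain'_of_reduce_eq_self : ∀ {w : List (α × Bool)}, reduce w = w → w.Chain' NC
  | [], _ => isChain_nil
  | x :: l, h => by
    have hle : (reduce l).length ≤ l.length := Red.length_le reduce.red
    rw [reduce.cons] at h
    cases hl : reduce l with
    | nil =>
      rw [hl] at h hle
      simp only [List.casesOn] at h
      injection h with h1 h2
      subst h2; exact isChain_singleton x
    | cons hd tl =>
      rw [hl] at h hle
      simp only [List.casesOn] at h
      by_cases hc : x.1 = hd.1 ∧ x.2 = !hd.2
      · rw [if_pos hc] at h
        have := congrArg List.length h
        simp at this hle; omega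
      · rw [if_neg hc] at h
        injection h with h1 h2
        have hll : l = hd :: tl := h2.symm
        have ih : l.Chain' NC := chain'_of_reduce_eq_self (by rw [hl, hll])
        rw [hll] at ih ⊢
        exact isChain_cons_cons.mpr ⟨hc, ih⟩
  termination_by w => w.length

theorem chain'_toWord (x : FreeGroup α) : x.toWord.Chain' NC :=
  chain'_of_reduce_eq_self (reduce_toWord x)

theorem toWord_mk_of_chain' {w : List (α × Bool)} (h : w.Chain' NC) : (mk w).toWord = w := by
  rw [toWord_mk, reduce_eq_self_of_chain' h]

theorem toWord_prefix (x : FreeGroup α) (n : ℕ) :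
    (mk (x.toWord.take n)).toWord = x.toWord.take n :=
  toWord_mk_of_chain' ((chain'_toWord x).take n)

theorem toWord_drop (x : FreeGroup α) (n : ℕ) :
    (mk (x.toWord.drop n)).toWord = x.toWord.drop n :=
  toWord_mk_of_chain' ((chain'_toWord x).drop n)

theorem wlen_prefix (x : FreeGroup α) {n : ℕ} (hn : n ≤ wlen x) :
    wlen (mk (x.toWord.take n)) = n := by
  rw [wlen, toWord_prefix, List.length_take]
  exact min_eq_left hn

theorem prefix_mul_drop (x : FreeGroup α) (n : ℕ) :
    mk (x.toWord.take n) * mk (x.toWord.drop n) = x := by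
  rw [mul_mk, List.take_append_drop, mk_toWord]

theorem inv_prefix_mul (x : FreeGroup α) (n : ℕ) :
    (mk (x.toWord.take n))⁻¹ * x = mk (x.toWord.drop n) :=
  inv_mul_eq_iff_eq_mul.mpr (prefix_mul_drop x n).symm

theorem wlen_inv_prefix_mul (x : FreeGroup α) (n : ℕ) :
    wlen ((mk (x.toWord.take n))⁻¹ * x) = wlen x - n := by
  rw [inv_prefix_mul, wlen, toWord_drop, List.length_drop]; rfl

theorem wlen_eq_zero_iff (x : FreeGroup α) : wlen x = 0 ↔ x = 1 := by
  rw [wlen, List.length_eq_zero_iff, toWord_eq_nil_iff]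

section Next

variable {q : ℕ} (e : (α × Bool) ≃ Fin (q + 1))

def nxt (c : α × Bool) (j : Fin q) : α × Bool := e.symm ((e (c.1, !c.2)).succAbove j)

theorem NC_nxt (c : α × Bool) (j : Fin q) : NC c (nxt e c j) := by
  rw [NC_iff]
  intro h
  exact Fin.succAbove_ne (e (c.1, !c.2)) j ((Equiv.symm_apply_eq e).mp h)

theorem nxt_inj (c : α × Bool) : Function.Injective (nxt e c) := fun j j' h => by
  have := e.symm.injective h
  exact Fin.succAbove_right_injective this

def go : (α × Bool) → List (Fin q) → List (α × Bool)
  | _, [] => []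
  | c, j :: js => nxt e c j :: go (nxt e c j) js

theorem go_length : ∀ (c : α × Bool) (js : List (Fin q)), (go e c js).length = js.length
  | _, [] => rfl
  | c, j :: js => by rw [go, List.length_cons, go_length]; rfl

theorem go_chain' : ∀ (c : α × Bool) (js : List (Fin q)), (c :: go e c js).Chain' NC
  | c, [] => isChain_singleton c
  | c, j :: js => by
    rw [go]
    change List.IsChain NC _
    rw [isChain_cons_cons]
    exact ⟨NC_nxt e c j, go_chain' (nxt e c j) js⟩

theorem go_inj : ∀ (c : α × Bool) (js js' : List (Fin q)),
    go e c js = go e c js' → js = js'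
  | _, [], [], _ => rfl
  | _, [], j' :: js', h => by simp [go] at h
  | _, j :: js, [], h => by simp [go] at h
  | c, j :: js, j' :: js', h => by
    rw [go, go] at h
    injection h with h1 h2
    have hj : j = j' := nxt_inj e c h1
    subst hj
    rw [go_inj (nxt e c j) js js' h2]

end Next

section Fin

variable [Fintype α] [Nonempty α]

theorem sphere_finite (m : ℕ) : {x : FreeGroup α | wlen x = m}.Finite := by
  have : {x : FreeGroup α | wlen x = m} ⊆ toWord ⁻¹' {w | w.length = m} := fun x hx => hx
  exact Set.Finite.subset (Set.Finite.preimage toWord_injective.injOn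
    (List.finite_length_eq _ m)) this

theorem ball_finite (N : ℕ) : {x : FreeGroup α | wlen x ≤ N}.Finite := by
  have : {x : FreeGroup α | wlen x ≤ N} ⊆ toWord ⁻¹' {w | w.length ≤ N} := fun x hx => hx
  exact Set.Finite.subset (Set.Finite.preimage toWord_injective.injOn
    (List.finite_length_le _ N)) this

variable {q : ℕ} (e : (α × Bool) ≃ Fin (q + 1))

include e in
theorem sphere_encard_lower (m : ℕ) :
    ((q ^ m : ℕ) : ℕ∞) ≤ {x : FreeGroup α | wlen x = m}.encard := by
  classical
  set c₀ : α × Bool := e.symm 0 with hc₀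
  set h : (Fin m → Fin q) → FreeGroup α := fun f => mk (go e c₀ (List.ofFn f)) with hh
  have hchain : ∀ f : Fin m → Fin q, ((go e c₀ (List.ofFn f)).Chain' NC) :=
    fun f => (go_chain' e c₀ (List.ofFn f)).tail
  have hmem : ∀ f, h f ∈ {x : FreeGroup α | wlen x = m} := by
    intro f
    simp only [Set.mem_setOf_eq, hh, wlen, toWord_mk_of_chain' (hchain f)]
    rw [go_length, List.length_ofFn]
  have hinj : Function.Injective h := by
    intro f f' hf
    have : go e c₀ (List.ofFn f) = go e c₀ (List.ofFn f') := by
      have := congrArg toWord hf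
      rwa [toWord_mk_of_chain' (hchain f), toWord_mk_of_chain' (hchain f')] at this
    exact List.ofFn_injective (go_inj e c₀ _ _ this)
  calc ((q ^ m : ℕ) : ℕ∞) = (Set.univ : Set (Fin m → Fin q)).encard := by
        rw [Set.encard_univ]
        simp [Nat.card_eq_fintype_card]
    _ = (h '' Set.univ).encard := (Set.InjOn.encard_image hinj.injOn).symm
    _ ≤ _ := Set.encard_le_encard (by rintro x ⟨f, _, rfl⟩; exact hmem f)

/-- The sphere of radius `m` as a Finset. -/
noncomputable def sphFin (m : ℕ) : Finset (FreeGroup α) := (sphere_finite (α := α) m).toFinset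

theorem mem_sphFin {m : ℕ} {x : FreeGroup α} : x ∈ sphFin (α := α) m ↔ wlen x = m := by
  simp [sphFin]

theorem sphFin_zero : (sphFin 0 : Finset (FreeGroup α)) = {1} := by
  ext x; simp [mem_sphFin, wlen_eq_zero_iff]

theorem card_sphFin_one_le : (sphFin 1 : Finset (FreeGroup α)).card ≤ Fintype.card α * 2 := by
  classical
  have : (sphFin 1 : Finset (FreeGroup α)).card ≤ (Finset.univ : Finset (α × Bool)).card := by
    apply Finset.card_le_card_of_injOn (fun x => x.toWord.getLastD (Classical.arbitrary _))
      (fun _ _ => Finset.mem_univ _)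
    intro x hx y hy hxy
    simp only [Finset.mem_coe, mem_sphFin] at hx hy
    obtain ⟨a, ha⟩ := List.length_eq_one_iff.mp hx
    obtain ⟨b, hb⟩ := List.length_eq_one_iff.mp hy
    apply toWord_injective
    dsimp only at hxy
    rw [ha, hb] at hxy ⊢
    simpa using hxy
  simpa [Fintype.card_prod] using this

theorem card_sphFin_succ_le {m : ℕ} (hm : 1 ≤ m) :
    (sphFin (m + 1) : Finset (FreeGroup α)).card
      ≤ (Fintype.card α * 2 - 1) * (sphFin m : Finset (FreeGroup α)).card := by
  classical
  set c₀ : α × Bool := Classical.arbitrary _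
  apply Finset.card_le_mul_card_image_of_maps_to
    (f := fun x : FreeGroup α => mk (x.toWord.take m))
  · intro x hx
    rw [mem_sphFin] at hx ⊢
    exact wlen_prefix x (by omega)
  · intro b hb
    rw [mem_sphFin] at hb
    have hbne : b.toWord ≠ [] := by
      intro h; rw [wlen, h] at hb; simp at hb; omega
    set lb := b.toWord.getLast hbne with hlb
    have key : ∀ x ∈ (sphFin (m+1) : Finset (FreeGroup α)).filter
        (fun a => mk (a.toWord.take m) = b),
        x.toWord = b.toWord ++ [x.toWord.getLastD c₀] := by
      intro x hx
      rw [Finset.mem_filter, mem_sphFin] at hx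
      obtain ⟨hx1, hx2⟩ := hx
      have hbw : b.toWord = x.toWord.take m := by rw [← hx2, toWord_prefix]
      have hxne : x.toWord ≠ [] := by
        intro h; rw [wlen, h] at hx1; simp at hx1
      have hgl : x.toWord.getLastD c₀ = x.toWord.getLast hxne := by
        rw [List.getLastD_eq_getLast?, List.getLast?_eq_getLast hxne]; rfl
      rw [hgl, hbw]
      have hlen : x.toWord.length - 1 = m := by
        have : x.toWord.length = m + 1 := hx1
        omega
      rw [← hlen, ← List.dropLast_eq_take]
      exact (List.dropLast_append_getLast hxne).symm
    have hcard : ((sphFin (m+1) : Finset (FreeGroup α)).filter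
          (fun a => mk (a.toWord.take m) = b)).card
        ≤ (Finset.univ.erase (lb.1, !lb.2) : Finset (α × Bool)).card := by
      apply Finset.card_le_card_of_injOn (fun x => x.toWord.getLastD c₀)
      · intro x hx
        have hk := key x hx
        have hch := chain'_toWord x
        rw [hk] at hch
        change List.IsChain NC _ at hch
        rw [List.isChain_append] at hch
        have hnc : NC lb (x.toWord.getLastD c₀) := by
          apply hch.2.2 lb _ _ rfl
          rw [List.getLast?_eq_getLast hbne]
          exact Option.mem_some_iff.mpr hlb.symm
        exact Finset.mem_erase.mpr ⟨NC_iff.mp hnc, Finset.mem_univ _⟩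
      · intro x hx y hy hxy
        dsimp only at hxy
        apply toWord_injective
        rw [key x hx, key y hy, hxy]
    calc _ ≤ _ := hcard
    _ ≤ _ := by
        rw [Finset.card_erase_of_mem (Finset.mem_univ _)]
        simp [Fintype.card_prod]

theorem card_sphFin_le (m : ℕ) (hα : 1 ≤ Fintype.card α) :
    (sphFin m : Finset (FreeGroup α)).card ≤ 2 * (Fintype.card α * 2 - 1) ^ m := by
  set q := Fintype.card α * 2 - 1 with hqdef
  have hq1 : 1 ≤ q := by omega
  induction m with
  | zero => rw [sphFin_zero]; simp
  | succ m ih =>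
    match m, ih with
    | 0, _ =>
      calc (sphFin 1 : Finset (FreeGroup α)).card ≤ Fintype.card α * 2 := card_sphFin_one_le
      _ ≤ 2 * q ^ 1 := by rw [pow_one]; omega
    | m + 1, ih =>
      calc (sphFin (m + 2) : Finset (FreeGroup α)).card ≤ q * (sphFin (m+1)).card :=
            card_sphFin_succ_le (by omega)
      _ ≤ q * (2 * q ^ (m+1)) := Nat.mul_le_mul_left _ ih
      _ = 2 * q ^ (m + 2) := by ring

end Fin

end RWT

/-- Weak type `(p,p)` lower bound, `1 < p < 2`. -/
theorem radial_weak_type_p_lower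
    (r : ℕ) (hr : 2 ≤ r) (q : ℕ) (hq : q = 2 * r - 1)
    (p : ℝ) (hp1 : 1 < p) (hp2 : p < 2) (p' : ℝ) (hp' : p' = p / (p - 1)) :
    ∃ c : ℝ, 0 < c ∧
      ∀ (a : ℕ → ℝ), (∀ n, 0 ≤ a n) →
      ∀ C : ℝ,
        (∀ g : FreeGroup (Fin r) → ℝ, (∀ x, 0 ≤ g x) → (Function.support g).Finite →
          ∀ t : ℝ, 0 < t →
            ENNReal.ofReal t *
                ({x : FreeGroup (Fin r) |
                    t < convR (fun y => a (wlen y)) g x}.encard : ℝ≥0∞) ^ (1 / p)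
              ≤ ENNReal.ofReal C *
                  (∑' x : FreeGroup (Fin r), ENNReal.ofReal (g x) ^ p) ^ (1 / p)) →
        (∑' n : ℕ, ENNReal.ofReal (a n) ^ p' * (q : ℝ≥0∞) ^ ((n : ℝ) * p' / p)) ≠ ∞ ∧
        ENNReal.ofReal c *
            (∑' n : ℕ, ENNReal.ofReal (a n) ^ p' *
              (q : ℝ≥0∞) ^ ((n : ℝ) * p' / p)) ^ (1 / p')
          ≤ ENNReal.ofReal C := by
  classical
  -- basic facts about exponents
  have hp0 : (0:ℝ) < p := by linarith
  have hpm1 : (0:ℝ) < p - 1 := by linarith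
  have hp'pos : 0 < p' := by rw [hp']; positivity
  have hp'ne : p' ≠ 0 := ne_of_gt hp'pos
  have hpp' : (p' - 1) * p = p' := by rw [hp']; field_simp; ring
  have hone_add : 1 + (p' - 1) = p' := by ring
  have hsum : 1 / p' + 1 / p = 1 := by rw [hp']; field_simp; ring
  have hq3 : 3 ≤ q := by omega
  have hqR : (0:ℝ) < (q:ℝ) := by positivity
  have hqE0 : (q : ℝ≥0∞) ≠ 0 := by simp; omega
  have hqEtop : (q : ℝ≥0∞) ≠ ⊤ := by simp
  -- instances and the letter equivalence
  haveI : Nonempty (Fin r) := ⟨⟨0, by omega⟩⟩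
  have hcard : Fintype.card (Fin r × Bool) = q + 1 := by
    simp [Fintype.card_prod]; omega
  set e : (Fin r × Bool) ≃ Fin (q + 1) := Fintype.equivFinOfCardEq hcard with he
  refine ⟨1/4, by norm_num, ?_⟩
  intro a ha C hw
  -- the weighted coefficients
  set v : ℕ → ℝ := fun n => a n * (q:ℝ) ^ ((n:ℝ)/p) with hv
  have hv0 : ∀ n, 0 ≤ v n := fun n => by
    have := ha n; positivity
  have hterm : ∀ n : ℕ, ENNReal.ofReal (v n ^ p')
      = ENNReal.ofReal (a n) ^ p' * (q : ℝ≥0∞) ^ ((n : ℝ) * p' / p) := by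
    intro n
    have hvn : v n = a n * (q:ℝ) ^ ((n:ℝ)/p) := rfl
    rw [hvn, Real.mul_rpow (ha n) (Real.rpow_nonneg hqR.le _),
      ENNReal.ofReal_mul (Real.rpow_nonneg (ha n) _),
      ← ENNReal.ofReal_rpow_of_nonneg (ha n) hp'pos.le,
      ← Real.rpow_mul hqR.le, ← ENNReal.ofReal_rpow_of_pos hqR,
      ENNReal.ofReal_natCast]
    congr 1
    ring
  -- the key estimate for each partial sum
  have key : ∀ N : ℕ, ENNReal.ofReal (∑ n ∈ Finset.range (N+1), v n ^ p')
      ≤ (4 * ENNReal.ofReal C) ^ p' := by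
    intro N
    set S : ℝ := ∑ n ∈ Finset.range (N+1), v n ^ p' with hS
    have hS0 : 0 ≤ S := Finset.sum_nonneg fun n _ => Real.rpow_nonneg (hv0 n) _
    rcases eq_or_lt_of_le hS0 with hSz | hSpos
    · rw [← hSz]; simp
    -- the test function
    set u : ℕ → ℝ := fun m => v (N - m) ^ (p' - 1) * (q:ℝ) ^ (-(m:ℝ)/p) with hu
    have hu0 : ∀ m, 0 ≤ u m := fun m => by
      have := hv0 (N - m); positivity
    set g : FreeGroup (Fin r) → ℝ := fun x => if wlen x ≤ N then u (wlen x) else 0 with hgdef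
    have hg0 : ∀ x, 0 ≤ g x := fun x => by
      rw [hgdef]; dsimp only; split
      · exact hu0 _
      · exact le_refl 0
    have hgsupp : (Function.support g).Finite := by
      apply Set.Finite.subset (RWT.ball_finite N)
      intro x hx
      simp only [Function.mem_support, hgdef] at hx
      by_contra hc
      simp only [Set.mem_setOf_eq, not_le] at hc
      exact hx (by rw [if_neg (by omega)])
    set t : ℝ := S * (q:ℝ) ^ (-(N:ℝ)/p) / 2 with htdef
    have ht : 0 < t := by
      rw [htdef]; positivity
    -- convolution lower bound on the sphere of radius N
    have hconv : ∀ x : FreeGroup (Fin r), wlen x = N → t < convR (fun y => a (wlen y)) g x := by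
      intro x hx
      classical
      set f : FreeGroup (Fin r) → ℝ := fun y => a (wlen y) * g (y⁻¹ * x) with hf
      have hf0 : ∀ y, 0 ≤ f y := fun y => mul_nonneg (ha _) (hg0 _)
      have hZ : Summable f := by
        apply summable_of_ne_finset_zero
          (s := (hgsupp.image (fun z => x * z⁻¹)).toFinset)
        intro y hy
        by_contra hne
        have hgne : g (y⁻¹ * x) ≠ 0 := by
          intro h
          exact hne (by rw [hf]; dsimp only; rw [h, mul_zero])
        apply hy
        rw [Set.Finite.mem_toFinset]
        refine ⟨y⁻¹ * x, hgne, ?_⟩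
        group
      set pref : ℕ → FreeGroup (Fin r) := fun n => FreeGroup.mk (x.toWord.take n) with hpref
      have hwpref : ∀ n, n ≤ N → wlen (pref n) = n := fun n hn =>
        RWT.wlen_prefix x (by omega)
      have hterm2 : ∀ n, n ≤ N → f (pref n) = v n ^ p' * (q:ℝ) ^ (-(N:ℝ)/p) := by
        intro n hn
        have h1 : wlen (pref n) = n := hwpref n hn
        have h2 : (pref n)⁻¹ * x = FreeGroup.mk (x.toWord.drop n) := RWT.inv_prefix_mul x n
        have h3 : wlen ((pref n)⁻¹ * x) = N - n := by
          rw [RWT.wlen_inv_prefix_mul, hx]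
        have h4 : g ((pref n)⁻¹ * x) = u (N - n) := by
          rw [hgdef]; dsimp only; rw [h3, if_pos (by omega)]
        have h5 : f (pref n) = a n * u (N - n) := by
          rw [hf]; dsimp only; rw [h1, h4]
        rw [h5]
        have h6 : u (N - n) = v n ^ (p' - 1) * (q:ℝ) ^ (-((N:ℝ) - (n:ℝ))/p) := by
          have : u (N - n) = v (N - (N - n)) ^ (p' - 1) * (q:ℝ) ^ (-((N - n : ℕ):ℝ)/p) := rfl
          rw [this, Nat.sub_sub_self hn, Nat.cast_sub hn]
        rw [h6]
        rcases eq_or_lt_of_le (hv0 n) with hvz | hvpos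
        · have haz : a n = 0 := by
            have : v n = a n * (q:ℝ) ^ ((n:ℝ)/p) := rfl
            rw [this] at hvz
            have hqp : (0:ℝ) < (q:ℝ) ^ ((n:ℝ)/p) := Real.rpow_pos_of_pos hqR _
            rcases mul_eq_zero.mp hvz.symm with h | h
            · exact h
            · exact absurd h hqp.ne'
          rw [haz, ← hvz, Real.zero_rpow hp'ne]
          ring
        · have han : a n = v n * (q:ℝ) ^ (-(n:ℝ)/p) := by
            have hvn : v n = a n * (q:ℝ) ^ ((n:ℝ)/p) := rfl
            rw [hvn, mul_assoc, ← Real.rpow_add hqR,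
              show (n:ℝ)/p + -(n:ℝ)/p = 0 by ring, Real.rpow_zero, mul_one]
          rw [han]
          rw [show v n * (q:ℝ) ^ (-(n:ℝ)/p) * (v n ^ (p' - 1) * (q:ℝ) ^ (-((N:ℝ) - (n:ℝ))/p))
            = (v n * v n ^ (p' - 1)) * ((q:ℝ) ^ (-(n:ℝ)/p) * (q:ℝ) ^ (-((N:ℝ) - (n:ℝ))/p))
            from by ring]
          congr 1
          · nth_rewrite 1 [← Real.rpow_one (v n)]
            rw [← Real.rpow_add hvpos, hone_add]
          · rw [← Real.rpow_add hqR]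
            congr 1
            field_simp
            ring
      have hinj : ∀ n ∈ Finset.range (N+1), ∀ n' ∈ Finset.range (N+1),
          pref n = pref n' → n = n' := by
        intro n hn n' hn' h
        rw [Finset.mem_range] at hn hn'
        have := congrArg wlen h
        rwa [hwpref n (by omega), hwpref n' (by omega)] at this
      have hsum2 : ∑ y ∈ (Finset.range (N+1)).image pref, f y
          = S * (q:ℝ) ^ (-(N:ℝ)/p) := by
        rw [Finset.sum_image hinj, hS, Finset.sum_mul]
        apply Finset.sum_congr rfl
        intro n hn
        rw [Finset.mem_range] at hn
        exact hterm2 n (by omega)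
      have hle : ∑ y ∈ (Finset.range (N+1)).image pref, f y ≤ convR (fun y => a (wlen y)) g x :=
        hZ.sum_le_tsum _ (fun y _ => hf0 y)
      rw [hsum2] at hle
      have h2t : t < S * (q:ℝ) ^ (-(N:ℝ)/p) := by
        rw [htdef]
        have hpos : 0 < S * (q:ℝ) ^ (-(N:ℝ)/p) := by positivity
        linarith
      linarith
    -- the norm of g
    have hnorm : (∑' x : FreeGroup (Fin r), ENNReal.ofReal (g x) ^ p)
        ≤ ENNReal.ofReal (2 * S) := by
      set ballFin : Finset (FreeGroup (Fin r)) := (RWT.ball_finite (α := Fin r) N).toFinset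
        with hballFin
      have hmemball : ∀ x : FreeGroup (Fin r), x ∈ ballFin ↔ wlen x ≤ N := by
        intro x; rw [hballFin, Set.Finite.mem_toFinset]; exact Iff.rfl
      have hzero : ∀ x : FreeGroup (Fin r), x ∉ ballFin → ENNReal.ofReal (g x) ^ p = 0 := by
        intro x hx
        rw [hmemball] at hx
        have : g x = 0 := by rw [hgdef]; exact if_neg hx
        rw [this, ENNReal.ofReal_zero, ENNReal.zero_rpow_of_pos hp0]
      have hmaps : ∀ x ∈ ballFin, wlen x ∈ Finset.range (N+1) := by
        intro x hx; rw [Finset.mem_range]; rw [hmemball] at hx; omega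
      -- the inner sums
      have hq21 : r * 2 - 1 = q := by omega
      have inner_bound : ∀ m ∈ Finset.range (N+1),
          (∑ x ∈ ballFin.filter (fun x => wlen x = m), ENNReal.ofReal (g x) ^ p)
            ≤ ENNReal.ofReal (2 * v (N - m) ^ p') := by
        intro m hm
        rw [Finset.mem_range] at hm
        have hcongr : ∀ x ∈ ballFin.filter (fun x => wlen x = m),
            ENNReal.ofReal (g x) ^ p = ENNReal.ofReal (u m) ^ p := by
          intro x hx
          rw [Finset.mem_filter] at hx
          have : g x = u m := by
            rw [hgdef]; dsimp only; rw [hx.2, if_pos (by omega)]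
          rw [this]
        rw [Finset.sum_congr rfl hcongr, Finset.sum_const, nsmul_eq_mul]
        have hfilter : ballFin.filter (fun x => wlen x = m) = RWT.sphFin (α := Fin r) m := by
          ext x
          rw [Finset.mem_filter, RWT.mem_sphFin, hmemball]
          constructor
          · exact fun h => h.2
          · exact fun h => ⟨by omega, h⟩
        have hcard_le : (ballFin.filter (fun x => wlen x = m)).card ≤ 2 * q ^ m := by
          rw [hfilter]
          have h1 := RWT.card_sphFin_le (α := Fin r) m (by simp [Fintype.card_fin]; omega)
          rwa [Fintype.card_fin, hq21] at h1
        calc ((ballFin.filter (fun x => wlen x = m)).card : ℝ≥0∞) * ENNReal.ofReal (u m) ^ p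
            ≤ ((2 * q ^ m : ℕ) : ℝ≥0∞) * ENNReal.ofReal (u m) ^ p := by
              apply mul_le_mul_left
              exact_mod_cast Nat.cast_le.mpr hcard_le
          _ = ENNReal.ofReal (((2 * q ^ m : ℕ) : ℝ) * u m ^ p) := by
              rw [ENNReal.ofReal_rpow_of_nonneg (hu0 m) hp0.le,
                ← ENNReal.ofReal_natCast (2 * q ^ m),
                ← ENNReal.ofReal_mul (by positivity)]
          _ = ENNReal.ofReal (2 * v (N - m) ^ p') := by
              congr 1
              have hup : u m ^ p = v (N - m) ^ p' * (q:ℝ) ^ (-(m:ℝ)) := by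
                have h1 : u m = v (N - m) ^ (p' - 1) * (q:ℝ) ^ (-(m:ℝ)/p) := rfl
                rw [h1, Real.mul_rpow (Real.rpow_nonneg (hv0 _) _)
                  (Real.rpow_nonneg hqR.le _),
                  ← Real.rpow_mul (hv0 _), ← Real.rpow_mul hqR.le, hpp']
                congr 2
                field_simp
              rw [hup]
              push_cast
              rw [← Real.rpow_natCast (q:ℝ) m]
              rw [show (2 * (q:ℝ) ^ (m:ℝ)) * (v (N - m) ^ p' * (q:ℝ) ^ (-(m:ℝ)))
                = 2 * v (N - m) ^ p' * ((q:ℝ) ^ (m:ℝ) * (q:ℝ) ^ (-(m:ℝ))) from by ring,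
                ← Real.rpow_add hqR]
              norm_num
      calc (∑' x : FreeGroup (Fin r), ENNReal.ofReal (g x) ^ p)
          = ∑ x ∈ ballFin, ENNReal.ofReal (g x) ^ p := tsum_eq_sum hzero
        _ = ∑ m ∈ Finset.range (N+1), ∑ x ∈ ballFin.filter (fun x => wlen x = m),
              ENNReal.ofReal (g x) ^ p :=
            (Finset.sum_fiberwise_of_maps_to hmaps _).symm
        _ ≤ ∑ m ∈ Finset.range (N+1), ENNReal.ofReal (2 * v (N - m) ^ p') :=
            Finset.sum_le_sum inner_bound
        _ = ENNReal.ofReal (∑ m ∈ Finset.range (N+1), 2 * v (N - m) ^ p') :=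
            (ENNReal.ofReal_sum_of_nonneg fun m _ => by
              have := Real.rpow_nonneg (hv0 (N - m)) p'; positivity).symm
        _ = ENNReal.ofReal (2 * S) := by
            congr 1
            rw [← Finset.mul_sum, hS]
            congr 1
            have := Finset.sum_range_reflect (fun n => v n ^ p') (N+1)
            simpa using this
    -- apply the weak type hypothesis
    have hmain := hw g hg0 hgsupp t ht
    -- lower bound for the cardinality term
    have hsub : {x : FreeGroup (Fin r) | wlen x = N}
        ⊆ {x : FreeGroup (Fin r) | t < convR (fun y => a (wlen y)) g x} :=
      fun x hx => hconv x hx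
    have hcount : ((q:ℝ≥0∞) ^ (N:ℕ)) ≤
        ({x : FreeGroup (Fin r) | t < convR (fun y => a (wlen y)) g x}.encard : ℝ≥0∞) := by
      have h1 := (RWT.sphere_encard_lower e N).trans (Set.encard_mono hsub)
      have h2 := ENat.toENNReal_le.mpr h1
      calc ((q:ℝ≥0∞) ^ (N:ℕ)) = (((q ^ N : ℕ) : ℕ∞) : ℝ≥0∞) := by
            push_cast; ring
      _ ≤ _ := h2
    -- put the pieces together
    set s : ℝ≥0∞ := ENNReal.ofReal S with hsdef
    have hsne : s ≠ 0 := (ENNReal.ofReal_pos.mpr hSpos).ne'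
    have hstop : s ≠ ⊤ := ENNReal.ofReal_ne_top
    have hL : ENNReal.ofReal t * (q:ℝ≥0∞)^((N:ℝ)/p)
        ≤ ENNReal.ofReal C * (ENNReal.ofReal (2*S))^(1/p) := by
      refine le_trans ?_ (le_trans hmain
        (mul_le_mul_right (ENNReal.rpow_le_rpow hnorm (by positivity)) _))
      apply mul_le_mul_right
      calc (q:ℝ≥0∞)^((N:ℝ)/p) = ((q:ℝ≥0∞)^(N:ℕ))^(1/p) := by
            rw [← ENNReal.rpow_natCast, ← ENNReal.rpow_mul]; congr 1; ring
        _ ≤ _ := ENNReal.rpow_le_rpow hcount (by positivity)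
    have ht' : ENNReal.ofReal t = s * (q:ℝ≥0∞)^(-(N:ℝ)/p) * ENNReal.ofReal (1/2) := by
      have h1 : t = S * ((q:ℝ)^(-(N:ℝ)/p)) * (1/2) := by rw [htdef]; ring
      rw [h1, ENNReal.ofReal_mul (by positivity), ENNReal.ofReal_mul hS0]
      congr 2
      rw [← ENNReal.ofReal_rpow_of_pos hqR, ENNReal.ofReal_natCast]
    have hqcancel : (q:ℝ≥0∞)^(-(N:ℝ)/p) * (q:ℝ≥0∞)^((N:ℝ)/p) = 1 := by
      rw [← ENNReal.rpow_add _ _ hqE0 hqEtop,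
        show (-(N:ℝ)/p + (N:ℝ)/p) = 0 by ring, ENNReal.rpow_zero]
    have hL2 : s * ENNReal.ofReal (1/2) ≤ ENNReal.ofReal C * (ENNReal.ofReal (2*S))^(1/p) := by
      calc s * ENNReal.ofReal (1/2)
          = ENNReal.ofReal t * (q:ℝ≥0∞)^((N:ℝ)/p) := by
            rw [ht', show s * (q:ℝ≥0∞)^(-(N:ℝ)/p) * ENNReal.ofReal (1/2) * (q:ℝ≥0∞)^((N:ℝ)/p)
              = s * ENNReal.ofReal (1/2) * ((q:ℝ≥0∞)^(-(N:ℝ)/p) * (q:ℝ≥0∞)^((N:ℝ)/p)) from by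
                ring, hqcancel, mul_one]
        _ ≤ _ := hL
    have h2S : (ENNReal.ofReal (2*S))^(1/p) ≤ 2 * s^(1/p) := by
      rw [ENNReal.ofReal_mul (by norm_num)]
      rw [ENNReal.mul_rpow_of_nonneg _ _ (by positivity)]
      apply mul_le_mul' ?_ le_rfl
      calc (ENNReal.ofReal 2)^(1/p) ≤ (2:ℝ≥0∞)^(1:ℝ) := by
            rw [ENNReal.ofReal_ofNat]
            exact ENNReal.rpow_le_rpow_of_exponent_le (by norm_num)
              (by rw [div_le_one hp0]; linarith)
        _ = 2 := by rw [ENNReal.rpow_one]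
    have hs : s ≤ (4 * ENNReal.ofReal C) * s^(1/p) := by
      have hhalf : ENNReal.ofReal (1/2) * 2 = 1 := by
        rw [show (2:ℝ≥0∞) = ENNReal.ofReal 2 by simp [ENNReal.ofReal_ofNat],
          ← ENNReal.ofReal_mul (by norm_num)]
        norm_num
      calc s = s * (ENNReal.ofReal (1/2) * 2) := by rw [hhalf, mul_one]
        _ = (s * ENNReal.ofReal (1/2)) * 2 := by ring
        _ ≤ (ENNReal.ofReal C * (ENNReal.ofReal (2*S))^(1/p)) * 2 :=
            mul_le_mul_left hL2 _
        _ ≤ (ENNReal.ofReal C * (2 * s^(1/p))) * 2 :=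
            mul_le_mul_left (mul_le_mul_right h2S _) _
        _ = (4 * ENNReal.ofReal C) * s^(1/p) := by ring
    have hsp_ne : s^(1/p) ≠ 0 := (ENNReal.rpow_pos (pos_iff_ne_zero.mpr hsne) hstop).ne'
    have hsp_top : s^(1/p) ≠ ⊤ := ENNReal.rpow_ne_top_of_nonneg (by positivity) hstop
    have hcancel : s^(1/p') ≤ 4 * ENNReal.ofReal C := by
      rw [← ENNReal.mul_le_mul_iff_left hsp_ne hsp_top]
      calc s^(1/p') * s^(1/p) = s := by
            rw [← ENNReal.rpow_add _ _ hsne hstop, hsum, ENNReal.rpow_one]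
        _ ≤ _ := hs
    calc s = (s^(1/p'))^(p') := by
          rw [← ENNReal.rpow_mul, one_div, inv_mul_cancel₀ hp'ne, ENNReal.rpow_one]
      _ ≤ (4 * ENNReal.ofReal C)^p' := ENNReal.rpow_le_rpow hcancel hp'pos.le
  -- conclude
  have hT : (∑' n : ℕ, ENNReal.ofReal (a n) ^ p' * (q : ℝ≥0∞) ^ ((n : ℝ) * p' / p))
      ≤ (4 * ENNReal.ofReal C) ^ p' := by
    apply ENNReal.tsum_le_of_sum_range_le
    intro n
    calc ∑ i ∈ Finset.range n, ENNReal.ofReal (a i) ^ p' * (q : ℝ≥0∞) ^ ((i : ℝ) * p' / p)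
        = ∑ i ∈ Finset.range n, ENNReal.ofReal (v i ^ p') := by
          exact Finset.sum_congr rfl fun i _ => (hterm i).symm
      _ = ENNReal.ofReal (∑ i ∈ Finset.range n, v i ^ p') :=
          (ENNReal.ofReal_sum_of_nonneg fun i _ => Real.rpow_nonneg (hv0 i) _).symm
      _ ≤ ENNReal.ofReal (∑ i ∈ Finset.range (n+1), v i ^ p') := by
          apply ENNReal.ofReal_le_ofReal
          apply Finset.sum_le_sum_of_subset_of_nonneg (Finset.range_subset_range.mpr (by omega))
          intro i _ _
          exact Real.rpow_nonneg (hv0 i) _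
      _ ≤ _ := key n
  have hBne : (4 * ENNReal.ofReal C) ^ p' ≠ ⊤ := by
    apply ENNReal.rpow_ne_top_of_nonneg (le_of_lt hp'pos)
    exact ENNReal.mul_ne_top (by simp) ENNReal.ofReal_ne_top
  refine ⟨ne_top_of_le_ne_top hBne hT, ?_⟩
  have h1 : (∑' n : ℕ, ENNReal.ofReal (a n) ^ p' * (q : ℝ≥0∞) ^ ((n : ℝ) * p' / p)) ^ (1/p')
      ≤ ((4 * ENNReal.ofReal C) ^ p') ^ (1/p') :=
    ENNReal.rpow_le_rpow hT (by positivity)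
  have h2 : ((4 * ENNReal.ofReal C) ^ p') ^ (1/p') = 4 * ENNReal.ofReal C := by
    rw [← ENNReal.rpow_mul]
    rw [mul_one_div, div_self hp'ne, ENNReal.rpow_one]
  rw [h2] at h1
  calc ENNReal.ofReal (1/4) * (∑' n : ℕ, ENNReal.ofReal (a n) ^ p' *
          (q : ℝ≥0∞) ^ ((n : ℝ) * p' / p)) ^ (1 / p')
      ≤ ENNReal.ofReal (1/4) * (4 * ENNReal.ofReal C) :=
        mul_le_mul_right h1 _
    _ = (ENNReal.ofReal (1/4) * 4) * ENNReal.ofReal C := by ring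
    _ = ENNReal.ofReal C := by
        rw [show (4:ℝ≥0∞) = ENNReal.ofReal 4 by simp [ENNReal.ofReal_ofNat],
          ← ENNReal.ofReal_mul (by norm_num)]
        norm_num
end
end

section
/- For every x in the free group F and every n ∈ ℕ, the number of elements w ∈ F with |w| = n and |w x| ≤ |x| is at most q^{⌊n/2⌋}. -/
noncomputable section

namespace CLDWAux

open List

variable {α : Type*} [DecidableEq α]

/-- The inverse of a single letter. -/
def inv1 (a : α × Bool) : α × Bool := (a.1, !a.2)

/-- A word is reduced iff no two adjacent letters are inverse to each other. -/
def IsRed (l : List (α × Bool)) : Prop :=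
  l.Chain' fun a b => ¬(a.1 = b.1 ∧ a.2 = !b.2)

theorem isRed_nil : IsRed ([] : List (α × Bool)) := List.isChain_nil

theorem IsRed.tail {a : α × Bool} {l : List (α × Bool)} (h : IsRed (a :: l)) : IsRed l :=
  List.IsChain.tail h

theorem IsRed.prefix {l t : List (α × Bool)} (h : IsRed (l ++ t)) : IsRed l :=
  List.IsChain.prefix h (l.prefix_append t)

/-- A reduced word is its own reduction. -/
theorem reduce_eq_self {l : List (α × Bool)} (h : IsRed l) : FreeGroup.reduce l = l := by
  induction l with
  | nil => rfl
  | cons a l ih =>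
    rw [FreeGroup.reduce.cons, ih h.tail]
    cases l with
    | nil => rfl
    | cons b t =>
      have hab : ¬(a.1 = b.1 ∧ a.2 = !b.2) := (List.isChain_cons_cons.mp h).1
      simp [hab]

theorem isRed_of_no_pair {l : List (α × Bool)}
    (h : ∀ (L₂ L₃ : List (α × Bool)) (y : α) (b : Bool), l ≠ L₂ ++ (y, b) :: (y, !b) :: L₃) :
    IsRed l := by
  induction l with
  | nil => exact isRed_nil
  | cons a l ih =>
    cases l with
    | nil => exact List.isChain_singleton a
    | cons b t =>
      rw [IsRed, List.Chain', List.isChain_cons_cons]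
      refine ⟨?_, ih fun L₂ L₃ y bb hh => h (a :: L₂) L₃ y bb (by rw [hh]; rfl)⟩
      rintro ⟨h1, h2⟩
      exact h [] t a.1 a.2 (by
        obtain ⟨a1, a2⟩ := a; obtain ⟨b1, b2⟩ := b
        simp only [List.nil_append]
        simp_all)

/-- The word of a free group element is reduced. -/
theorem isRed_toWord (w : FreeGroup α) : IsRed w.toWord := by
  apply isRed_of_no_pair
  intro L₂ L₃ y b heq
  have : FreeGroup.reduce w.toWord = L₂ ++ (y, b) :: (y, !b) :: L₃ := by
    rw [FreeGroup.reduce_toWord]; exact heq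
  exact FreeGroup.reduce.not this

theorem invRev_cons (a : α × Bool) (l : List (α × Bool)) :
    FreeGroup.invRev (a :: l) = FreeGroup.invRev l ++ [(a.1, !a.2)] := by
  simp [FreeGroup.invRev]

/-- Key structural lemma: the normal form of a product of two reduced words is obtained by
cancelling a suffix of the first against the matching prefix of the second. -/
theorem mul_normal_form (u : List (α × Bool)) :
    ∀ (v : List (α × Bool)), IsRed u → IsRed v →
    ∃ k, k ≤ u.length ∧ k ≤ v.length ∧
      (FreeGroup.mk u * FreeGroup.mk v).toWord = u.take (u.length - k) ++ v.drop k ∧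
      u.drop (u.length - k) = FreeGroup.invRev (v.take k) := by
  induction u using List.reverseRecOn with
  | nil =>
    intro v _ hv
    refine ⟨0, by simp, by simp, ?_, by simp [FreeGroup.invRev]⟩
    simp only [List.length_nil, Nat.sub_zero, List.take_nil, List.drop_zero, List.nil_append]
    rw [FreeGroup.mul_mk, List.nil_append, FreeGroup.toWord_mk, reduce_eq_self hv]
  | append_singleton u₀ a ih =>
    intro v hu hv
    cases v with
    | nil =>
      refine ⟨0, by simp, by simp, ?_, by simp [FreeGroup.invRev]⟩
      simp only [Nat.sub_zero, List.take_length, List.drop_nil, List.append_nil]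
      rw [FreeGroup.mul_mk, List.append_nil, FreeGroup.toWord_mk, reduce_eq_self hu]
    | cons b v₀ =>
      by_cases hab : a.1 = b.1 ∧ a.2 = !b.2
      · -- cancellation happens
        have hb : b = (a.1, !a.2) := by
          obtain ⟨a1, a2⟩ := a; obtain ⟨b1, b2⟩ := b; simp_all
        have hstep : FreeGroup.Red.Step (u₀ ++ [a] ++ b :: v₀) (u₀ ++ v₀) := by
          have : u₀ ++ [a] ++ b :: v₀ = u₀ ++ (a.1, a.2) :: (a.1, !a.2) :: v₀ := by
            rw [hb]; simp
          rw [this]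
          exact FreeGroup.Red.Step.not
        have hred : FreeGroup.reduce (u₀ ++ [a] ++ b :: v₀) = FreeGroup.reduce (u₀ ++ v₀) :=
          FreeGroup.reduce.Step.eq hstep
        obtain ⟨k₀, hk₁, hk₂, hnf, hcan⟩ := ih v₀ hu.prefix hv.tail
        refine ⟨k₀ + 1, by simp only [List.length_append, List.length_cons, List.length_nil]; omega, by simp only [List.length_cons]; omega, ?_, ?_⟩
        · have h1 : (FreeGroup.mk (u₀ ++ [a]) * FreeGroup.mk (b :: v₀)).toWord
              = (FreeGroup.mk u₀ * FreeGroup.mk v₀).toWord := by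
            rw [FreeGroup.mul_mk, FreeGroup.mul_mk, FreeGroup.toWord_mk, FreeGroup.toWord_mk, hred]
          rw [h1, hnf]
          have hlen : (u₀ ++ [a]).length - (k₀ + 1) = u₀.length - k₀ := by simp
          rw [hlen]
          congr 1
          rw [List.take_append_of_le_length (by omega)]
        · have hlen : (u₀ ++ [a]).length - (k₀ + 1) = u₀.length - k₀ := by simp
          rw [hlen, List.drop_append_of_le_length (by omega), hcan]
          rw [show (b :: v₀).take (k₀ + 1) = b :: v₀.take k₀ from rfl, invRev_cons]
          rw [hb]
          simp
      · -- no cancellation: the concatenation is reduced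
        have hredu : IsRed (u₀ ++ [a] ++ b :: v₀) := by
          rw [IsRed, List.Chain', List.isChain_append]
          refine ⟨hu, hv, ?_⟩
          intro p hp q hq
          simp only [List.getLast?_append, List.getLast?_singleton] at hp
          simp only [List.head?_cons] at hq
          obtain rfl : a = p := by simpa using hp
          obtain rfl : b = q := by simpa using hq
          exact hab
        refine ⟨0, by simp, by simp, ?_, by simp [FreeGroup.invRev]⟩
        simp only [Nat.sub_zero, List.take_length, List.drop_zero]
        rw [FreeGroup.mul_mk, FreeGroup.toWord_mk, reduce_eq_self hredu]

theorem getD_drop (l : List (α × Bool)) (n i : ℕ) (d : α × Bool) :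
    (l.drop n).getD i d = l.getD (n + i) d := by
  simp [List.getD_eq_getElem?_getD, List.getElem?_drop]

/-- In a reduced word, a letter is never the inverse of the next letter. -/
theorem isRed_getD_ne {l : List (α × Bool)} (h : IsRed l) (i : ℕ) (hi : i + 1 < l.length)
    (d : α × Bool) : l.getD i d ≠ inv1 (l.getD (i + 1) d) := by
  have hc := List.isChain_iff_getElem.mp h i (by omega)
  rw [List.getD_eq_getElem l d (by omega), List.getD_eq_getElem l d hi]
  intro he
  apply hc
  constructor
  · rw [he]; rfl
  · rw [he]; rfl

end CLDWAux

open CLDWAux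

/-- For every `x` in the free group and every `n`, the number of `w` with `|w| = n` and
`|w x| ≤ |x|` is at most `q^{⌊n/2⌋}`, where `q = 2r - 1`. -/
theorem count_length_decreasing_words
    (r : ℕ) (hr : 2 ≤ r) (q : ℕ) (hq : q = 2 * r - 1)
    (x : FreeGroup (Fin r)) (n : ℕ) :
    {w : FreeGroup (Fin r) | wlen w = n ∧ wlen (w * x) ≤ wlen x}.encard
      ≤ (q ^ (n / 2) : ℕ) := by
  classical
  set S := {w : FreeGroup (Fin r) | wlen w = n ∧ wlen (w * x) ≤ wlen x} with hS
  have hr0 : 0 < r := by omega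
  set d : Fin r × Bool := (⟨0, hr0⟩, true) with hd
  set m := n / 2 with hm
  set v := x.toWord with hv
  -- Key cancellation fact: for `w ∈ S` the whole second half of `w` is determined by `x`.
  have key : ∀ w ∈ S, (FreeGroup.toWord w).drop m = FreeGroup.invRev (v.take (n - m)) := by
    intro w hw
    obtain ⟨hlen, hle⟩ := hw
    have hlen' : (FreeGroup.toWord w).length = n := hlen
    obtain ⟨k, hk₁, hk₂, hnf, hcan⟩ :=
      mul_normal_form (FreeGroup.toWord w) v (isRed_toWord w) (isRed_toWord x)
    rw [FreeGroup.mk_toWord] at hnf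
    rw [show FreeGroup.mk v = x from FreeGroup.mk_toWord] at hnf
    have hlwx : wlen (w * x) = (n - k) + (v.length - k) := by
      rw [wlen, hnf, List.length_append, List.length_take, List.length_drop, hlen']
      omega
    have hwx : wlen x = v.length := rfl
    rw [hlwx, hwx] at hle
    rw [hlen'] at hk₁ hnf hcan
    -- hence `k ≥ n - m`
    have hkm : n - m ≤ k := by omega
    have h1 : (FreeGroup.toWord w).drop m = ((FreeGroup.toWord w).drop (n - k)).drop (m - (n - k)) := by
      rw [List.drop_drop]
      congr 1
      omega
    rw [h1, hcan]
    rw [FreeGroup.invRev, FreeGroup.invRev, List.drop_reverse, List.length_map,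
      List.length_take, ← List.map_take, List.take_take]
    have hidx : (k ⊓ v.length - (m - (n - k))) ⊓ k = n - m := by omega
    rw [hidx]
  -- an injective "coding" of elements of a punctured alphabet
  obtain ⟨φ, hφ⟩ : ∃ φ : (Fin r × Bool) → (Fin r × Bool) → Fin q,
      ∀ b a₁ a₂, a₁ ≠ b → a₂ ≠ b → φ b a₁ = φ b a₂ → a₁ = a₂ := by
    have hcard : ∀ b : Fin r × Bool, Fintype.card {a : Fin r × Bool // a ≠ b} = q := by
      intro b
      have : Fintype.card {a : Fin r × Bool // a ≠ b}
          = Fintype.card (Fin r × Bool) - Fintype.card {a : Fin r × Bool // a = b} :=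
        Fintype.card_subtype_compl _
      rw [this, Fintype.card_subtype_eq]
      simp [hq]
      omega
    have hq0 : 0 < q := by omega
    refine ⟨fun b a =>
      if h : a = b then ⟨0, hq0⟩ else (Fintype.equivFinOfCardEq (hcard b)) ⟨a, h⟩, ?_⟩
    intro b a₁ a₂ h₁ h₂ he
    simp only at he
    rw [dif_neg h₁, dif_neg h₂] at he
    have := (Fintype.equivFinOfCardEq (hcard b)).injective he
    exact congrArg Subtype.val this
  -- the coding map
  set Φ : FreeGroup (Fin r) → (Fin m → Fin q) := fun w i =>
    φ (inv1 ((FreeGroup.toWord w).getD (i + 1) d)) ((FreeGroup.toWord w).getD i d) with hΦ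
  have hinj : Set.InjOn Φ S := by
    intro w₁ hw₁ w₂ hw₂ he
    have hl₁ : (FreeGroup.toWord w₁).length = n := hw₁.1
    have hl₂ : (FreeGroup.toWord w₂).length = n := hw₂.1
    have hdropeq : (FreeGroup.toWord w₁).drop m = (FreeGroup.toWord w₂).drop m :=
      (key w₁ hw₁).trans (key w₂ hw₂).symm
    have hhigh : ∀ j, m ≤ j →
        (FreeGroup.toWord w₁).getD j d = (FreeGroup.toWord w₂).getD j d := by
      intro j hj
      have h2 : ((FreeGroup.toWord w₁).drop m).getD (j - m) d
          = ((FreeGroup.toWord w₂).drop m).getD (j - m) d := by rw [hdropeq]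
      rw [getD_drop, getD_drop, show m + (j - m) = j by omega] at h2
      exact h2
    have hdown : ∀ t j, m ≤ j + t →
        (FreeGroup.toWord w₁).getD j d = (FreeGroup.toWord w₂).getD j d := by
      intro t
      induction t with
      | zero => intro j hj; exact hhigh j (by omega)
      | succ t ihd =>
        intro j hj
        by_cases hjm : m ≤ j + t
        · exact ihd j hjm
        · have hjlt : j < m := by omega
          have hj1 : (FreeGroup.toWord w₁).getD (j + 1) d
              = (FreeGroup.toWord w₂).getD (j + 1) d := ihd (j + 1) (by omega)
          have hfun := congrFun he ⟨j, hjlt⟩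
          simp only [hΦ] at hfun
          have hmn : m < n := by omega
          have hne₁ : (FreeGroup.toWord w₁).getD j d
              ≠ inv1 ((FreeGroup.toWord w₁).getD (j + 1) d) :=
            isRed_getD_ne (isRed_toWord w₁) j (by omega) d
          have hne₂ : (FreeGroup.toWord w₂).getD j d
              ≠ inv1 ((FreeGroup.toWord w₂).getD (j + 1) d) :=
            isRed_getD_ne (isRed_toWord w₂) j (by omega) d
          rw [hj1] at hfun hne₁
          exact hφ _ _ _ hne₁ hne₂ hfun
    have hwords : FreeGroup.toWord w₁ = FreeGroup.toWord w₂ := by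
      apply List.ext_getElem (by rw [hl₁, hl₂])
      intro i h₁ h₂
      have hgd := hdown m i (by omega)
      rwa [List.getD_eq_getElem _ d h₁, List.getD_eq_getElem _ d h₂] at hgd
    exact FreeGroup.toWord_injective hwords
  calc S.encard = (Φ '' S).encard := (hinj.encard_image).symm
    _ ≤ (Set.univ : Set (Fin m → Fin q)).encard := Set.encard_mono (Set.subset_univ _)
    _ = ((q ^ m : ℕ) : ℕ∞) := by
        rw [Set.encard_univ, ENat.card_eq_coe_fintype_card]
        norm_num
end
end

section
/- Let G be a (discrete) group satisfying the Følner condition: for every ε > 0 and every finite K ⊆ G there exists a finite nonempty N ⊆ G with |xN △ N| < ε |N| for all x ∈ K. Then for every finitely supported symmetric probability measure μ on G (μ ≥ 0, Σ_x μ(x) = 1, μ(x⁻¹) = μ(x)), the supremum over finite nonempty sets N, M ⊆ G of ⟨μ ∗ χ_N, χ_M⟩ / (|N|^{1/2} |M|^{1/2}) equals 1. -/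
open scoped symmDiff

noncomputable section

/-- If a group satisfies the Følner condition, then for every finitely supported
symmetric probability measure `μ` the supremum over finite nonempty sets `N, M` of
`⟨μ ∗ χ_N, χ_M⟩ / (|N|^{1/2} |M|^{1/2})` equals `1`. -/
theorem folner_convolution_sup_eq_one {G : Type*} [Group G] [DecidableEq G]
    (hFol : ∀ ε : ℝ, 0 < ε → ∀ K : Finset G, ∃ N : Finset G, N.Nonempty ∧
      ∀ x ∈ K, (((N.image (fun y => x * y)) ∆ N).card : ℝ) < ε * N.card)
    (μ : G → ℝ) (hμ0 : ∀ x, 0 ≤ μ x) (hμfin : (Function.support μ).Finite)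
    (hμsum : ∑' x : G, μ x = 1) (hμsymm : ∀ x, μ x⁻¹ = μ x) :
    sSup {t : ℝ | ∃ N M : Finset G, N.Nonempty ∧ M.Nonempty ∧
        t = (∑ y ∈ M, ∑' x : G, μ x * (if x⁻¹ * y ∈ N then (1 : ℝ) else 0)) /
            (Real.sqrt N.card * Real.sqrt M.card)} = 1 := by
  classical
  set T := {t : ℝ | ∃ N M : Finset G, N.Nonempty ∧ M.Nonempty ∧
        t = (∑ y ∈ M, ∑' x : G, μ x * (if x⁻¹ * y ∈ N then (1 : ℝ) else 0)) /
            (Real.sqrt N.card * Real.sqrt M.card)} with hTdef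
  set S := hμfin.toFinset with hSdef
  have hzero : ∀ x ∉ S, μ x = 0 := by
    intro x hx
    by_contra h
    exact hx (by simp [hSdef, Function.mem_support, h])
  have hsum1 : ∑ x ∈ S, μ x = 1 := by
    rw [← hμsum]
    exact (tsum_eq_sum (fun x hx => hzero x hx)).symm
  have hinner : ∀ (N : Finset G) (y : G),
      (∑' x : G, μ x * (if x⁻¹ * y ∈ N then (1 : ℝ) else 0)) =
        ∑ x ∈ S, μ x * (if x⁻¹ * y ∈ N then (1 : ℝ) else 0) :=
    fun N y => tsum_eq_sum (fun x hx => by rw [hzero x hx, zero_mul])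
  have hnum : ∀ N M : Finset G,
      (∑ y ∈ M, ∑' x : G, μ x * (if x⁻¹ * y ∈ N then (1 : ℝ) else 0)) =
      ∑ x ∈ S, μ x * ((M.filter fun y => x⁻¹ * y ∈ N).card : ℝ) := by
    intro N M
    rw [Finset.sum_congr rfl (fun y _ => hinner N y), Finset.sum_comm]
    refine Finset.sum_congr rfl fun x _ => ?_
    rw [← Finset.mul_sum]
    congr 1
    rw [Finset.sum_boole]
  have hcard : ∀ (N M : Finset G) (x : G),
      ((M.filter fun y => x⁻¹ * y ∈ N).card : ℝ) ≤
        Real.sqrt N.card * Real.sqrt M.card := by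
    intro N M x
    set c := (M.filter fun y => x⁻¹ * y ∈ N).card with hc
    have h1 : c ≤ M.card := Finset.card_filter_le _ _
    have h2 : c ≤ N.card := by
      apply Finset.card_le_card_of_injOn (fun y => x⁻¹ * y)
      · intro y hy
        exact (Finset.mem_filter.mp hy).2
      · intro a _ b _ h
        exact mul_left_cancel h
    have hmul : (c : ℝ) * c ≤ (N.card : ℝ) * M.card := by
      exact_mod_cast Nat.mul_le_mul h2 h1
    calc (c : ℝ) = Real.sqrt ((c : ℝ) * c) := (Real.sqrt_mul_self (by positivity)).symm
      _ ≤ Real.sqrt ((N.card : ℝ) * M.card) := Real.sqrt_le_sqrt hmul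
      _ = Real.sqrt N.card * Real.sqrt M.card := Real.sqrt_mul (by positivity) _
  have hub : ∀ t ∈ T, t ≤ 1 := by
    rintro t ⟨N, M, hN, hM, rfl⟩
    have hNpos : (0 : ℝ) < Real.sqrt N.card := by
      rw [Real.sqrt_pos]; exact_mod_cast hN.card_pos
    have hMpos : (0 : ℝ) < Real.sqrt M.card := by
      rw [Real.sqrt_pos]; exact_mod_cast hM.card_pos
    rw [div_le_one (by positivity), hnum]
    calc ∑ x ∈ S, μ x * ((M.filter fun y => x⁻¹ * y ∈ N).card : ℝ)
        ≤ ∑ x ∈ S, μ x * (Real.sqrt N.card * Real.sqrt M.card) :=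
          Finset.sum_le_sum fun x _ =>
            mul_le_mul_of_nonneg_left (hcard N M x) (hμ0 x)
      _ = Real.sqrt N.card * Real.sqrt M.card := by
          rw [← Finset.sum_mul, hsum1, one_mul]
  have hlow : ∀ ε : ℝ, 0 < ε → ∃ t ∈ T, 1 - ε ≤ t := by
    intro ε hε
    obtain ⟨N, hNne, hNb⟩ := hFol ε hε S
    refine ⟨_, ⟨N, N, hNne, hNne, rfl⟩, ?_⟩
    have hn : (0 : ℝ) < N.card := by exact_mod_cast hNne.card_pos
    rw [hnum, Real.mul_self_sqrt hn.le, le_div_iff₀ hn]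
    have hL : (1 - ε) * (N.card : ℝ) = ∑ x ∈ S, μ x * ((1 - ε) * N.card) := by
      rw [← Finset.sum_mul, hsum1, one_mul]
    rw [hL]
    refine Finset.sum_le_sum fun x hx => ?_
    refine mul_le_mul_of_nonneg_left ?_ (hμ0 x)
    have hfe : (N.filter fun y => x⁻¹ * y ∈ N) = N ∩ N.image (fun y => x * y) := by
      ext y
      simp only [Finset.mem_filter, Finset.mem_inter, Finset.mem_image]
      refine and_congr_right fun _ => ⟨fun h => ⟨x⁻¹ * y, h, by group⟩, ?_⟩
      rintro ⟨z, hz, rfl⟩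
      simpa using hz
    rw [hfe]
    set A := N.image (fun y => x * y) with hA
    have hΔ := hNb x hx
    have hsub : (N \ A).card ≤ (A ∆ N).card :=
      Finset.card_le_card (Finset.subset_union_right)
    have hia : (N ∩ A).card + (N \ A).card = N.card :=
      Finset.card_inter_add_card_sdiff N A
    have hiaR : ((N ∩ A).card : ℝ) + ((N \ A).card : ℝ) = (N.card : ℝ) := by
      exact_mod_cast hia
    have hsubR : ((N \ A).card : ℝ) ≤ ((A ∆ N).card : ℝ) := by exact_mod_cast hsub
    nlinarith [hΔ, hiaR, hsubR]
  obtain ⟨t₀, ht₀, _⟩ := hlow 1 one_pos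
  have hTne : T.Nonempty := ⟨t₀, ht₀⟩
  have hbdd : BddAbove T := ⟨1, hub⟩
  refine le_antisymm (csSup_le hTne hub) ?_
  refine le_of_forall_sub_le fun ε hε => ?_
  obtain ⟨t, htT, hget⟩ := hlow ε hε
  exact hget.trans (le_csSup hbdd htT)
end
end

section
/- Let G be a (discrete) group satisfying the Følner condition: for every ε > 0 and every finite K ⊆ G there exists a finite nonempty N ⊆ G with |xN △ N| < ε |N| for all x ∈ K. Let 1 < p < ∞ and p′ = p/(p−1). Then for every finitely supported symmetric probability measure μ on G (μ ≥ 0, Σ_x μ(x) = 1, μ(x⁻¹) = μ(x)), the supremum over finite nonempty sets N, M ⊆ G of ⟨μ ∗ χ_N, χ_M⟩ / (|N|^{1/p} |M|^{1/p′}) equals 1. -/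
open scoped symmDiff

noncomputable section

/-- If a group satisfies the Følner condition, then for `1 < p < ∞`, `p' = p/(p-1)`,
and every finitely supported symmetric probability measure `μ`, the supremum over
finite nonempty sets `N, M` of `⟨μ ∗ χ_N, χ_M⟩ / (|N|^{1/p} |M|^{1/p'})` equals `1`. -/
theorem folner_convolution_sup_eq_one_lp {G : Type*} [Group G] [DecidableEq G]
    (hFol : ∀ ε : ℝ, 0 < ε → ∀ K : Finset G, ∃ N : Finset G, N.Nonempty ∧
      ∀ x ∈ K, (((N.image (fun y => x * y)) ∆ N).card : ℝ) < ε * N.card)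
    (p : ℝ) (hp : 1 < p) (p' : ℝ) (hp' : p' = p / (p - 1))
    (μ : G → ℝ) (hμ0 : ∀ x, 0 ≤ μ x) (hμfin : (Function.support μ).Finite)
    (hμsum : ∑' x : G, μ x = 1) (hμsymm : ∀ x, μ x⁻¹ = μ x) :
    sSup {t : ℝ | ∃ N M : Finset G, N.Nonempty ∧ M.Nonempty ∧
        t = (∑ y ∈ M, ∑' x : G, μ x * (if x⁻¹ * y ∈ N then (1 : ℝ) else 0)) /
            ((N.card : ℝ) ^ (1 / p) * (M.card : ℝ) ^ (1 / p'))} = 1 := by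
  classical
  have hp0 : (0:ℝ) < p := lt_trans one_pos hp
  have hps : (0:ℝ) < p - 1 := sub_pos.mpr hp
  have hp'0 : (0:ℝ) < p' := by rw [hp']; exact div_pos hp0 hps
  have hconj : 1/p + 1/p' = 1 := by
    rw [hp']; field_simp; ring
  set S : Finset G := hμfin.toFinset with hSdef
  have hSmem : ∀ x, x ∈ S ↔ μ x ≠ 0 := by
    intro x; simp [hSdef, Set.Finite.mem_toFinset, Function.mem_support]
  have hts : ∀ (N : Finset G) (y : G),
      (∑' x : G, μ x * (if x⁻¹ * y ∈ N then (1:ℝ) else 0))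
        = ∑ x ∈ S, μ x * (if x⁻¹ * y ∈ N then (1:ℝ) else 0) := by
    intro N y
    refine tsum_eq_sum ?_
    intro x hx
    have : μ x = 0 := by by_contra h; exact hx ((hSmem x).mpr h)
    simp [this]
  have hμS : ∑ x ∈ S, μ x = 1 := by
    rw [← hμsum]
    refine (tsum_eq_sum ?_).symm
    intro x hx
    by_contra h; exact hx ((hSmem x).mpr h)
  -- numerator rewriting
  have hnum : ∀ N M : Finset G,
      (∑ y ∈ M, ∑ x ∈ S, μ x * (if x⁻¹ * y ∈ N then (1:ℝ) else 0))
        = ∑ x ∈ S, μ x * ((M.filter (fun y => x⁻¹ * y ∈ N)).card : ℝ) := by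
    intro N M
    rw [Finset.sum_comm]
    refine Finset.sum_congr rfl fun x _ => ?_
    rw [← Finset.mul_sum, Finset.sum_boole]
  have hcard_le : ∀ (N M : Finset G) (x : G),
      ((M.filter (fun y => x⁻¹ * y ∈ N)).card : ℝ) ≤ min (N.card : ℝ) (M.card : ℝ) := by
    intro N M x
    refine le_min ?_ ?_
    · have : (M.filter (fun y => x⁻¹ * y ∈ N)).card ≤ N.card := by
        apply Finset.card_le_card_of_injOn (fun y => x⁻¹ * y)
        · intro y hy; exact (Finset.mem_filter.mp hy).2
        · intro a _ b _ h; exact mul_left_cancel h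
      exact_mod_cast this
    · exact_mod_cast Finset.card_filter_le M _
  -- every element of the set is ≤ 1
  have hub : ∀ t ∈ {t : ℝ | ∃ N M : Finset G, N.Nonempty ∧ M.Nonempty ∧
        t = (∑ y ∈ M, ∑' x : G, μ x * (if x⁻¹ * y ∈ N then (1 : ℝ) else 0)) /
            ((N.card : ℝ) ^ (1 / p) * (M.card : ℝ) ^ (1 / p'))}, t ≤ 1 := by
    rintro t ⟨N, M, hN, hM, rfl⟩
    have hN0 : (0:ℝ) < N.card := by exact_mod_cast Finset.card_pos.mpr hN
    have hM0 : (0:ℝ) < M.card := by exact_mod_cast Finset.card_pos.mpr hM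
    have hden : (0:ℝ) < (N.card : ℝ) ^ (1 / p) * (M.card : ℝ) ^ (1 / p') :=
      mul_pos (Real.rpow_pos_of_pos hN0 _) (Real.rpow_pos_of_pos hM0 _)
    rw [div_le_one hden]
    have h1 : (∑ y ∈ M, ∑' x : G, μ x * (if x⁻¹ * y ∈ N then (1 : ℝ) else 0))
        = ∑ x ∈ S, μ x * ((M.filter (fun y => x⁻¹ * y ∈ N)).card : ℝ) := by
      rw [Finset.sum_congr rfl (fun y _ => hts N y), hnum]
    rw [h1]
    set m : ℝ := min (N.card : ℝ) (M.card : ℝ) with hm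
    have hm0 : 0 < m := lt_min hN0 hM0
    have h2 : (∑ x ∈ S, μ x * ((M.filter (fun y => x⁻¹ * y ∈ N)).card : ℝ)) ≤ m := by
      calc ∑ x ∈ S, μ x * ((M.filter (fun y => x⁻¹ * y ∈ N)).card : ℝ)
          ≤ ∑ x ∈ S, μ x * m := by
            refine Finset.sum_le_sum fun x _ => ?_
            exact mul_le_mul_of_nonneg_left (hcard_le N M x) (hμ0 x)
        _ = m := by rw [← Finset.sum_mul, hμS, one_mul]
    refine h2.trans ?_
    have hmm : m = m ^ (1/p) * m ^ (1/p') := by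
      rw [← Real.rpow_add hm0, hconj, Real.rpow_one]
    rw [hmm]
    have e1 : m ^ (1/p) ≤ (N.card : ℝ) ^ (1/p) :=
      Real.rpow_le_rpow hm0.le (min_le_left _ _) (by positivity)
    have e2 : m ^ (1/p') ≤ (M.card : ℝ) ^ (1/p') :=
      Real.rpow_le_rpow hm0.le (min_le_right _ _) (by positivity)
    exact mul_le_mul e1 e2 (Real.rpow_nonneg hm0.le _) (Real.rpow_nonneg hN0.le _)
  have hbdd : BddAbove {t : ℝ | ∃ N M : Finset G, N.Nonempty ∧ M.Nonempty ∧
        t = (∑ y ∈ M, ∑' x : G, μ x * (if x⁻¹ * y ∈ N then (1 : ℝ) else 0)) /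
            ((N.card : ℝ) ^ (1 / p) * (M.card : ℝ) ^ (1 / p'))} := ⟨1, hub⟩
  apply le_antisymm
  · exact Real.sSup_le hub zero_le_one
  · refine le_of_forall_pos_le_add ?_
    intro ε hε
    obtain ⟨N, hNne, hNfol⟩ := hFol ε hε S
    have hN0 : (0:ℝ) < N.card := by exact_mod_cast Finset.card_pos.mpr hNne
    -- the candidate value with M = N
    have hmemb : (∑ y ∈ N, ∑' x : G, μ x * (if x⁻¹ * y ∈ N then (1 : ℝ) else 0)) /
            ((N.card : ℝ) ^ (1 / p) * (N.card : ℝ) ^ (1 / p')) ∈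
        {t : ℝ | ∃ N M : Finset G, N.Nonempty ∧ M.Nonempty ∧
        t = (∑ y ∈ M, ∑' x : G, μ x * (if x⁻¹ * y ∈ N then (1 : ℝ) else 0)) /
            ((N.card : ℝ) ^ (1 / p) * (M.card : ℝ) ^ (1 / p'))} :=
      ⟨N, N, hNne, hNne, rfl⟩
    have hle := le_csSup hbdd hmemb
    have hden : ((N.card : ℝ) ^ (1 / p) * (N.card : ℝ) ^ (1 / p')) = (N.card : ℝ) := by
      rw [← Real.rpow_add hN0, hconj, Real.rpow_one]
    -- lower bound on the value
    have h1 : (∑ y ∈ N, ∑' x : G, μ x * (if x⁻¹ * y ∈ N then (1 : ℝ) else 0))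
        = ∑ x ∈ S, μ x * ((N.filter (fun y => x⁻¹ * y ∈ N)).card : ℝ) := by
      rw [Finset.sum_congr rfl (fun y _ => hts N y), hnum]
    have hcardge : ∀ x ∈ S, (1 - ε) * (N.card : ℝ) ≤
        ((N.filter (fun y => x⁻¹ * y ∈ N)).card : ℝ) := by
      intro x hx
      have hfol := hNfol x hx
      set xN := N.image (fun y => x * y) with hxN
      have hcardxN : xN.card = N.card :=
        Finset.card_image_of_injective _ (mul_right_injective x)
      have hfeq : N.filter (fun y => x⁻¹ * y ∈ N) = xN ∩ N := by
        ext y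
        simp only [Finset.mem_filter, Finset.mem_inter, hxN, Finset.mem_image]
        constructor
        · rintro ⟨h1, h2⟩; exact ⟨⟨x⁻¹ * y, h2, by group⟩, h1⟩
        · rintro ⟨⟨z, hz, rfl⟩, h2⟩
          refine ⟨h2, ?_⟩; simpa using hz
      have hsplit : (xN ∩ N).card + (xN \ N).card = xN.card :=
        Finset.card_inter_add_card_sdiff xN N
      have hsub : xN \ N ⊆ xN ∆ N := by
        intro y hy
        simp only [Finset.mem_symmDiff]
        exact Or.inl (Finset.mem_sdiff.mp hy)
      have hsd : ((xN \ N).card : ℝ) ≤ ((xN ∆ N).card : ℝ) := by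
        exact_mod_cast Finset.card_le_card hsub
      rw [hfeq]
      have hR : ((xN ∩ N).card : ℝ) + ((xN \ N).card : ℝ) = (N.card : ℝ) := by
        exact_mod_cast congrArg (Nat.cast : ℕ → ℝ) (hsplit.trans hcardxN)
      nlinarith [hfol, hsd, hR]
    have hnumge : (1 - ε) * (N.card : ℝ) ≤
        ∑ x ∈ S, μ x * ((N.filter (fun y => x⁻¹ * y ∈ N)).card : ℝ) := by
      calc (1 - ε) * (N.card : ℝ) = ∑ x ∈ S, μ x * ((1 - ε) * (N.card : ℝ)) := by
            rw [← Finset.sum_mul, hμS, one_mul]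
        _ ≤ _ := Finset.sum_le_sum fun x hx =>
            mul_le_mul_of_nonneg_left (hcardge x hx) (hμ0 x)
    have hval : 1 - ε ≤ (∑ y ∈ N, ∑' x : G, μ x * (if x⁻¹ * y ∈ N then (1 : ℝ) else 0)) /
            ((N.card : ℝ) ^ (1 / p) * (N.card : ℝ) ^ (1 / p')) := by
      rw [hden, h1, le_div_iff₀ hN0]
      linarith [hnumge]
    linarith [hle, hval]
end
end

section
/- For every n ∈ ℕ and every finite subset E of the free group F, Σ_{x∈F} ((χ_n ∗ χ_E)(x))² ≤ 4 (n+1) q^n |E|. (This is the weak type (2,2) estimate ‖λ(χ_n)‖_{2→(2,∞)} ≤ 2 (n+1)^{1/2} q^{n/2} for the convolution operator with the indicator of the sphere of radius n, the special case f = χ_n of the general radial weak type (2,2) theorem.) -/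
open scoped ENNReal

noncomputable section

/-- Convolution of `ℝ≥0∞`-valued functions on a group:
`(f ∗ g)(x) = Σ_y f(y) g(y⁻¹ x)`. -/
def conv {G : Type*} [Group G] (f g : G → ℝ≥0∞) (x : G) : ℝ≥0∞ :=
  ∑' y, f y * g (y⁻¹ * x)

/-- Indicator (ℝ≥0∞-valued) of the sphere of radius `n` in the free group. -/
def sphInd {α : Type*} [DecidableEq α] (n : ℕ) (x : FreeGroup α) : ℝ≥0∞ :=
  if wlen x = n then 1 else 0

/-- Indicator function (ℝ≥0∞-valued) of a finite set. -/
def finInd {G : Type*} [DecidableEq G] (E : Finset G) (x : G) : ℝ≥0∞ :=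
  if x ∈ E then 1 else 0

namespace SWT

open FreeGroup List

variable {α : Type*} [DecidableEq α]

/-- non-cancellation of consecutive letters -/
def Ok (a b : α × Bool) : Prop := ¬(a.1 = b.1 ∧ a.2 = !b.2)

instance (a b : α × Bool) : Decidable (Ok a b) := by unfold Ok; infer_instance

lemma chain'_reduce (L : List (α × Bool)) : (FreeGroup.reduce L).Chain' Ok := by
  induction L with
  | nil => exact List.isChain_nil
  | cons x L ih =>
    rw [FreeGroup.reduce.cons]
    cases h : FreeGroup.reduce L with
    | nil => exact List.isChain_singleton _
    | cons hd tl =>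
      rw [h] at ih
      dsimp only
      split_ifs with hc
      · exact ih.tail
      · exact List.isChain_cons_cons.2 ⟨hc, ih⟩

lemma reduce_eq_self {L : List (α × Bool)} (h : L.Chain' Ok) : FreeGroup.reduce L = L := by
  induction L with
  | nil => rfl
  | cons x L ih =>
    rw [FreeGroup.reduce.cons, ih h.tail]
    cases L with
    | nil => rfl
    | cons hd tl =>
      have hOk : Ok x hd := (List.isChain_cons_cons.1 h).1
      dsimp only
      rw [if_neg hOk]

lemma chain'_toWord (x : FreeGroup α) : x.toWord.Chain' Ok := by
  rw [← FreeGroup.reduce_toWord]; exact chain'_reduce _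

lemma toWord_mk_of {L : List (α × Bool)} (h : L.Chain' Ok) : (FreeGroup.mk L).toWord = L := by
  rw [FreeGroup.toWord_mk, reduce_eq_self h]

lemma wlen_mk {L : List (α × Bool)} (h : L.Chain' Ok) : wlen (FreeGroup.mk L) = L.length := by
  rw [wlen, toWord_mk_of h]

lemma wlen_one : wlen (1 : FreeGroup α) = 0 := by simp [wlen, FreeGroup.toWord_one]

lemma wlen_eq_zero {x : FreeGroup α} : wlen x = 0 ↔ x = 1 := by
  rw [wlen, List.length_eq_zero_iff, FreeGroup.toWord_eq_nil_iff]

lemma wlen_inv (x : FreeGroup α) : wlen x⁻¹ = wlen x := FreeGroup.norm_inv_eq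

lemma wlen_mul_le (x y : FreeGroup α) : wlen (x * y) ≤ wlen x + wlen y :=
  FreeGroup.norm_mul_le x y

lemma mul_eq_mk_append (u v : FreeGroup α) : u * v = FreeGroup.mk (u.toWord ++ v.toWord) := by
  conv_lhs => rw [← FreeGroup.mk_toWord (x := u), ← FreeGroup.mk_toWord (x := v)]
  rw [FreeGroup.mul_mk]

lemma parity (u v : FreeGroup α) : ∃ k, wlen (u * v) + 2 * k = wlen u + wlen v := by
  have h1 : (u * v).toWord = FreeGroup.reduce (u.toWord ++ v.toWord) := by
    rw [mul_eq_mk_append, FreeGroup.toWord_mk]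
  obtain ⟨k, hk⟩ := FreeGroup.Red.length (FreeGroup.reduce.red (L := u.toWord ++ v.toWord))
  refine ⟨k, ?_⟩
  simp only [wlen, h1]
  simp only [List.length_append] at hk
  omega

lemma exists_concat {x : FreeGroup α} (h : x ≠ 1) : ∃ W m, x.toWord = W ++ [m] := by
  rcases List.eq_nil_or_concat x.toWord with h0 | ⟨W, m, hm⟩
  · exact absurd (FreeGroup.toWord_eq_nil_iff.1 h0) h
  · exact ⟨W, m, by simpa [List.concat_eq_append] using hm⟩

lemma mul_single_cancel {x : FreeGroup α} {W : List (α × Bool)} {m : α × Bool}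
    (h : x.toWord = W ++ [m]) :
    x * FreeGroup.mk [(m.1, !m.2)] = FreeGroup.mk W ∧ (FreeGroup.mk W).toWord = W := by
  have hc : (W ++ [m]).Chain' Ok := h ▸ chain'_toWord x
  have hW : W.Chain' Ok := (List.isChain_append.1 hc).1
  constructor
  · have hx : x = FreeGroup.mk (W ++ [m]) := by rw [← h, FreeGroup.mk_toWord]
    rw [hx, FreeGroup.mul_mk]
    have hstep : FreeGroup.mk (W ++ (m.1, m.2) :: (m.1, !m.2) :: ([] : List (α × Bool)))
        = FreeGroup.mk (W ++ []) := Quot.sound (FreeGroup.Red.Step.not)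
    simpa using hstep
  · exact toWord_mk_of hW

lemma no_cancel {x y : FreeGroup α} {W : List (α × Bool)} {m ℓ : α × Bool} {T : List (α × Bool)}
    (hx : x.toWord = W ++ [m]) (hy : y.toWord = ℓ :: T) (hne : m ≠ (ℓ.1, !ℓ.2)) :
    wlen (x * y) = wlen x + wlen y := by
  have hcx : (W ++ [m]).Chain' Ok := hx ▸ chain'_toWord x
  have hcy : (ℓ :: T).Chain' Ok := hy ▸ chain'_toWord y
  have hok : Ok m ℓ := by
    rintro ⟨h1, h2⟩
    exact hne (Prod.ext h1 h2)
  have hchain : ((W ++ [m]) ++ ℓ :: T).Chain' Ok := by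
    refine List.isChain_append.2 ⟨hcx, hcy, ?_⟩
    intro a ha b hb
    simp only [List.getLast?_concat, Option.mem_def, Option.some.injEq] at ha
    simp only [List.head?_cons, Option.mem_def, Option.some.injEq] at hb
    subst ha; subst hb; exact hok
  have : x * y = FreeGroup.mk ((W ++ [m]) ++ ℓ :: T) := by
    rw [mul_eq_mk_append, hx, hy]
  rw [this, wlen_mk hchain, wlen, wlen, hx, hy]
  simp; omega

lemma head_cancels {x g : FreeGroup α} {ℓ : α × Bool} {T : List (α × Bool)}
    (hg : g.toWord = ℓ :: T) (hlt : wlen (x * g) < wlen x + wlen g) :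
    ∃ W, x.toWord = W ++ [(ℓ.1, !ℓ.2)] := by
  have hx1 : x ≠ 1 := by
    rintro rfl
    rw [one_mul, wlen_one] at hlt
    omega
  obtain ⟨W, m, hx⟩ := exists_concat hx1
  by_cases hm : m = (ℓ.1, !ℓ.2)
  · exact ⟨W, hm ▸ hx⟩
  · exact absurd (no_cancel hx hg hm) (by omega)

section Count

open FreeGroup

variable (r q : ℕ)

/-- Bound for the number of reduced words of length `k` over `Fin r`. -/
def SbE (k : ℕ) : ℝ≥0∞ := if k = 0 then 1 else ((2*r : ℕ) : ℝ≥0∞) * ((q : ℕ) : ℝ≥0∞)^(k-1)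

lemma sphere0 : (∑' x : FreeGroup (Fin r), if wlen x = 0 then (1:ℝ≥0∞) else 0) = 1 := by
  have h : ∀ x : FreeGroup (Fin r),
      (if wlen x = 0 then (1:ℝ≥0∞) else 0) = if x = 1 then 1 else 0 := fun x => by
    simp [wlen_eq_zero]
  rw [tsum_congr h, tsum_ite_eq]

lemma sphere1 : (∑' x : FreeGroup (Fin r), if wlen x = 1 then (1:ℝ≥0∞) else 0)
    ≤ ((2*r : ℕ) : ℝ≥0∞) := by
  have hpt : ∀ x : FreeGroup (Fin r), (if wlen x = 1 then (1:ℝ≥0∞) else 0)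
      ≤ ∑ ℓ : Fin r × Bool, (if x = FreeGroup.mk [ℓ] then (1:ℝ≥0∞) else 0) := by
    intro x
    by_cases h : wlen x = 1
    · obtain ⟨a, ha⟩ := List.length_eq_one_iff.1 (by simpa [wlen] using h)
      have hx : x = FreeGroup.mk [a] := by rw [← ha, FreeGroup.mk_toWord]
      rw [if_pos h]
      refine le_trans (le_of_eq (if_pos hx).symm)
        (Finset.single_le_sum
          (f := fun ℓ : Fin r × Bool => if x = FreeGroup.mk [ℓ] then (1:ℝ≥0∞) else 0)
          (fun i _ => zero_le) (Finset.mem_univ a))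
    · simp [h]
  calc (∑' x : FreeGroup (Fin r), if wlen x = 1 then (1:ℝ≥0∞) else 0)
      ≤ ∑' x : FreeGroup (Fin r), ∑ ℓ : Fin r × Bool,
          (if x = FreeGroup.mk [ℓ] then (1:ℝ≥0∞) else 0) := ENNReal.tsum_le_tsum hpt
    _ = ∑ ℓ : Fin r × Bool, ∑' x : FreeGroup (Fin r),
          (if x = FreeGroup.mk [ℓ] then (1:ℝ≥0∞) else 0) :=
        Summable.tsum_finsetSum (fun i _ => ENNReal.summable)
    _ = ∑ ℓ : Fin r × Bool, (1:ℝ≥0∞) := by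
        refine Finset.sum_congr rfl fun ℓ _ => ?_
        exact tsum_ite_eq (FreeGroup.mk [ℓ]) (fun _ => (1:ℝ≥0∞))
    _ = ((2*r : ℕ) : ℝ≥0∞) := by
        simp [Finset.card_univ, mul_comm]

lemma sphere_step (hq : q + 1 = 2*r) (k : ℕ) (hk : 1 ≤ k) :
    (∑' x : FreeGroup (Fin r), if wlen x = k + 1 then (1:ℝ≥0∞) else 0)
      ≤ (q : ℝ≥0∞) * ∑' x : FreeGroup (Fin r), if wlen x = k then (1:ℝ≥0∞) else 0 := by
  classical
  have h1 : ∀ x : FreeGroup (Fin r), (if wlen x = k+1 then (1:ℝ≥0∞) else 0)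
      ≤ ∑ ℓ : Fin r × Bool,
          (if (wlen x = k+1 ∧ x.toWord.getLast? = some ℓ) then (1:ℝ≥0∞) else 0) := by
    intro x
    by_cases h : wlen x = k+1
    · have hx1 : x ≠ 1 := by intro h0; rw [h0, SWT.wlen_one] at h; omega
      obtain ⟨W, m, hW⟩ := SWT.exists_concat hx1
      have hlast : x.toWord.getLast? = some m := by rw [hW]; exact List.getLast?_concat
      have := Finset.single_le_sum
        (f := fun ℓ : Fin r × Bool =>
          if (wlen x = k+1 ∧ x.toWord.getLast? = some ℓ) then (1:ℝ≥0∞) else 0)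
        (fun i _ => zero_le) (Finset.mem_univ m)
      simpa [h, hlast] using this
    · simp [h]
  have h2 : ∀ ℓ : Fin r × Bool,
      (∑' x : FreeGroup (Fin r),
        if (wlen x = k+1 ∧ x.toWord.getLast? = some ℓ) then (1:ℝ≥0∞) else 0)
      ≤ ∑' v : FreeGroup (Fin r),
          if (wlen v = k ∧ ∀ m' ∈ v.toWord.getLast?, SWT.Ok m' ℓ) then (1:ℝ≥0∞) else 0 := by
    intro ℓ
    have hpt : ∀ x : FreeGroup (Fin r),
        (if (wlen x = k+1 ∧ x.toWord.getLast? = some ℓ) then (1:ℝ≥0∞) else 0)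
        ≤ (fun v : FreeGroup (Fin r) =>
            if (wlen v = k ∧ ∀ m' ∈ v.toWord.getLast?, SWT.Ok m' ℓ) then (1:ℝ≥0∞) else 0)
          (x * FreeGroup.mk [(ℓ.1, !ℓ.2)]) := by
      intro x
      by_cases h : wlen x = k+1 ∧ x.toWord.getLast? = some ℓ
      · obtain ⟨hlen, hlast⟩ := h
        have hx1 : x ≠ 1 := by intro h0; rw [h0, SWT.wlen_one] at hlen; omega
        obtain ⟨W, m, hW⟩ := SWT.exists_concat hx1
        have hm : m = ℓ := by
          rw [hW, List.getLast?_concat] at hlast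
          exact Option.some_injective _ hlast
        subst hm
        obtain ⟨hmul, htw⟩ := SWT.mul_single_cancel hW
        have hWlen : W.length = k := by
          have := congrArg List.length hW
          simp only [List.length_append, List.length_cons, List.length_nil] at this
          have hxlen : x.toWord.length = k + 1 := hlen
          omega
        have hjunc := (List.isChain_append.1 (hW ▸ SWT.chain'_toWord x)).2.2
        have hcond : wlen (FreeGroup.mk W) = k ∧
            ∀ m' ∈ (FreeGroup.mk W).toWord.getLast?, SWT.Ok m' m := by
          refine ⟨by rw [wlen, htw, hWlen], fun m' hm' => ?_⟩
          rw [htw] at hm'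
          exact hjunc m' hm' m (by simp)
        show _ ≤ (if (wlen (x * FreeGroup.mk [(m.1, !m.2)]) = k ∧
            ∀ m' ∈ (x * FreeGroup.mk [(m.1, !m.2)]).toWord.getLast?, SWT.Ok m' m)
            then (1:ℝ≥0∞) else 0)
        rw [hmul, if_pos hcond, if_pos ⟨hlen, hlast⟩]
      · simp [h]
    calc (∑' x : FreeGroup (Fin r),
        if (wlen x = k+1 ∧ x.toWord.getLast? = some ℓ) then (1:ℝ≥0∞) else 0)
        ≤ ∑' x : FreeGroup (Fin r),
            (fun v : FreeGroup (Fin r) =>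
              if (wlen v = k ∧ ∀ m' ∈ v.toWord.getLast?, SWT.Ok m' ℓ) then (1:ℝ≥0∞) else 0)
            (x * FreeGroup.mk [(ℓ.1, !ℓ.2)]) := ENNReal.tsum_le_tsum hpt
      _ = _ := by
          simpa using ((Equiv.mulRight (FreeGroup.mk [(ℓ.1, !ℓ.2)])).tsum_eq
            (fun v => if (wlen v = k ∧ ∀ m' ∈ v.toWord.getLast?, SWT.Ok m' ℓ)
              then (1:ℝ≥0∞) else 0))
  have h3 : ∀ v : FreeGroup (Fin r),
      (∑ ℓ : Fin r × Bool,
        if (wlen v = k ∧ ∀ m' ∈ v.toWord.getLast?, SWT.Ok m' ℓ) then (1:ℝ≥0∞) else 0)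
      ≤ (q : ℝ≥0∞) * (if wlen v = k then (1:ℝ≥0∞) else 0) := by
    intro v
    by_cases h : wlen v = k
    · have hv1 : v ≠ 1 := by intro h0; rw [h0, SWT.wlen_one] at h; omega
      obtain ⟨W, m, hW⟩ := SWT.exists_concat hv1
      have hlast : v.toWord.getLast? = some m := by rw [hW]; exact List.getLast?_concat
      have hiff : ∀ ℓ : Fin r × Bool,
          ((wlen v = k ∧ ∀ m' ∈ v.toWord.getLast?, SWT.Ok m' ℓ) ↔ ℓ ≠ (m.1, !m.2)) := by
        intro ℓ
        constructor
        · rintro ⟨-, hok⟩ rfl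
          exact hok m hlast ⟨rfl, by simp⟩
        · intro hne
          refine ⟨h, fun m' hm' => ?_⟩
          have hm'm : m' = m := by
            have := hm'
            rw [Option.mem_def, hlast, Option.some.injEq] at this
            exact this.symm
          subst hm'm
          rintro ⟨e1, e2⟩
          apply hne
          have : ℓ.2 = !m'.2 := by rw [e2, Bool.not_not]
          exact Prod.ext e1.symm (by rw [e2, Bool.not_not])
      calc (∑ ℓ : Fin r × Bool,
            if (wlen v = k ∧ ∀ m' ∈ v.toWord.getLast?, SWT.Ok m' ℓ) then (1:ℝ≥0∞) else 0)
          = ∑ ℓ : Fin r × Bool, (if ℓ ≠ (m.1, !m.2) then (1:ℝ≥0∞) else 0) :=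
            Finset.sum_congr rfl fun ℓ _ => if_congr (hiff ℓ) rfl rfl
        _ = ((Finset.univ.filter (fun ℓ : Fin r × Bool => ℓ ≠ (m.1, !m.2))).card : ℝ≥0∞) := by
            rw [← Finset.sum_filter]; simp [mul_two]
        _ ≤ (q : ℝ≥0∞) * (if wlen v = k then (1:ℝ≥0∞) else 0) := by
            rw [Finset.filter_ne', Finset.card_erase_of_mem (Finset.mem_univ _)]
            have hcard : Fintype.card (Fin r × Bool) = 2*r := by
              rw [Fintype.card_prod, Fintype.card_fin, Fintype.card_bool]; omega
            rw [Finset.card_univ, hcard, if_pos h, mul_one]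
            refine le_of_eq ?_
            congr 1
            omega
    · have : ∀ ℓ : Fin r × Bool,
          (if (wlen v = k ∧ ∀ m' ∈ v.toWord.getLast?, SWT.Ok m' ℓ) then (1:ℝ≥0∞) else 0) = 0 :=
        fun ℓ => by simp [h]
      rw [Finset.sum_congr rfl (fun ℓ _ => this ℓ)]
      simp
  calc (∑' x : FreeGroup (Fin r), if wlen x = k + 1 then (1:ℝ≥0∞) else 0)
      ≤ ∑' x : FreeGroup (Fin r), ∑ ℓ : Fin r × Bool,
          (if (wlen x = k+1 ∧ x.toWord.getLast? = some ℓ) then (1:ℝ≥0∞) else 0) :=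
        ENNReal.tsum_le_tsum h1
    _ = ∑ ℓ : Fin r × Bool, ∑' x : FreeGroup (Fin r),
          (if (wlen x = k+1 ∧ x.toWord.getLast? = some ℓ) then (1:ℝ≥0∞) else 0) :=
        Summable.tsum_finsetSum (fun i _ => ENNReal.summable)
    _ ≤ ∑ ℓ : Fin r × Bool, ∑' v : FreeGroup (Fin r),
          (if (wlen v = k ∧ ∀ m' ∈ v.toWord.getLast?, SWT.Ok m' ℓ) then (1:ℝ≥0∞) else 0) :=
        Finset.sum_le_sum (fun ℓ _ => h2 ℓ)
    _ = ∑' v : FreeGroup (Fin r), ∑ ℓ : Fin r × Bool,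
          (if (wlen v = k ∧ ∀ m' ∈ v.toWord.getLast?, SWT.Ok m' ℓ) then (1:ℝ≥0∞) else 0) :=
        (Summable.tsum_finsetSum (fun i _ => ENNReal.summable)).symm
    _ ≤ ∑' v : FreeGroup (Fin r), (q : ℝ≥0∞) * (if wlen v = k then (1:ℝ≥0∞) else 0) :=
        ENNReal.tsum_le_tsum h3
    _ = (q : ℝ≥0∞) * ∑' v : FreeGroup (Fin r), (if wlen v = k then (1:ℝ≥0∞) else 0) :=
        ENNReal.tsum_mul_left


lemma sphere_bound (hq : q + 1 = 2*r) (k : ℕ) :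
    (∑' x : FreeGroup (Fin r), if wlen x = k then (1:ℝ≥0∞) else 0) ≤ SbE r q k := by
  induction k with
  | zero => rw [sphere0]; simp [SbE]
  | succ k ih =>
    cases k with
    | zero =>
      refine le_trans (sphere1 r) ?_
      simp [SbE]
    | succ k' =>
      calc (∑' x : FreeGroup (Fin r), if wlen x = k' + 1 + 1 then (1:ℝ≥0∞) else 0)
          ≤ (q : ℝ≥0∞) * ∑' x : FreeGroup (Fin r), (if wlen x = k' + 1 then (1:ℝ≥0∞) else 0) :=
            sphere_step r q hq (k'+1) (by omega)
        _ ≤ (q : ℝ≥0∞) * SbE r q (k'+1) := mul_le_mul_right ih _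
        _ = SbE r q (k'+2) := by
            simp only [SbE, if_neg (Nat.succ_ne_zero _)]
            rw [show k' + 2 - 1 = k' + 1 by omega, show k' + 1 - 1 = k' by omega, pow_succ']
            ring

lemma lemK (hq : q + 1 = 2*r) :
    ∀ (c n : ℕ) (g : FreeGroup (Fin r)), c ≤ n →
      (∑' w : FreeGroup (Fin r),
        if (wlen w = n ∧ wlen (w * g) + 2*c = n + wlen g) then (1:ℝ≥0∞) else 0)
        ≤ SbE r q (n - c) := by
  intro c
  induction c with
  | zero =>
    intro n g _
    have hpt : ∀ w : FreeGroup (Fin r),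
        (if (wlen w = n ∧ wlen (w * g) + 2*0 = n + wlen g) then (1:ℝ≥0∞) else 0)
        ≤ (if wlen w = n then (1:ℝ≥0∞) else 0) := by
      intro w
      by_cases h : wlen w = n
      · by_cases h2 : wlen (w * g) + 2*0 = n + wlen g
        · rw [if_pos ⟨h, h2⟩, if_pos h]
        · rw [if_neg (show ¬(wlen w = n ∧ wlen (w * g) + 2*0 = n + wlen g) from
            fun hc => h2 hc.2), if_pos h]
          exact zero_le
      · rw [if_neg (show ¬(wlen w = n ∧ wlen (w * g) + 2*0 = n + wlen g) from
          fun hc => h hc.1), if_neg h]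
    refine le_trans (ENNReal.tsum_le_tsum hpt) ?_
    simpa using sphere_bound r q hq n
  | succ c ihc =>
    intro n g hcn
    have hn : 1 ≤ n := by omega
    by_cases hg : g = 1
    · subst hg
      have h0 : ∀ w : FreeGroup (Fin r),
          (if (wlen w = n ∧ wlen (w * 1) + 2*(c+1) = n + wlen (1 : FreeGroup (Fin r))) then (1:ℝ≥0∞) else 0) = 0 := by
        intro w
        rw [if_neg]
        rintro ⟨h1, h2⟩
        rw [mul_one, h1, SWT.wlen_one] at h2
        omega
      rw [tsum_congr h0, tsum_zero]
      exact zero_le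
    · cases hgt : g.toWord with
      | nil => exact absurd (FreeGroup.toWord_eq_nil_iff.1 hgt) hg
      | cons ℓ T =>
        have hcT : T.Chain' SWT.Ok := (hgt ▸ SWT.chain'_toWord g).tail
        have hg'w : (FreeGroup.mk T).toWord = T := SWT.toWord_mk_of hcT
        have hag : FreeGroup.mk [ℓ] * FreeGroup.mk T = g := by
          rw [FreeGroup.mul_mk]
          conv_rhs => rw [← FreeGroup.mk_toWord (x := g), hgt]
          rfl
        have hglen : wlen g = T.length + 1 := by
          rw [wlen, hgt]; simp
        have hg'len : wlen (FreeGroup.mk T) = T.length := by rw [wlen, hg'w]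
        set F : FreeGroup (Fin r) → ℝ≥0∞ := fun v =>
          if (wlen v = n - 1 ∧ wlen (v * FreeGroup.mk T) + 2*c
              = (n-1) + wlen (FreeGroup.mk T)) then (1:ℝ≥0∞) else 0 with hF
        have key : ∀ w : FreeGroup (Fin r),
            (if (wlen w = n ∧ wlen (w * g) + 2*(c+1) = n + wlen g) then (1:ℝ≥0∞) else 0)
            ≤ F (w * FreeGroup.mk [ℓ]) := by
          intro w
          by_cases h : (wlen w = n ∧ wlen (w * g) + 2*(c+1) = n + wlen g)
          · obtain ⟨h1, h2⟩ := h
            have hlt : wlen (w * g) < wlen w + wlen g := by omega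
            obtain ⟨W, hW⟩ := SWT.head_cancels hgt hlt
            obtain ⟨hmul, htw⟩ := SWT.mul_single_cancel hW
            have hmul' : w * FreeGroup.mk [ℓ] = FreeGroup.mk W := by
              simpa [Bool.not_not] using hmul
            have hWlen : W.length + 1 = n := by
              have := congrArg List.length hW
              simp only [List.length_append, List.length_cons, List.length_nil] at this
              have hwl : w.toWord.length = n := h1
              omega
            have hcond : wlen (w * FreeGroup.mk [ℓ]) = n - 1 ∧
                wlen ((w * FreeGroup.mk [ℓ]) * FreeGroup.mk T) + 2*c
                  = (n-1) + wlen (FreeGroup.mk T) := by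
              constructor
              · rw [hmul', wlen, htw]; omega
              · rw [mul_assoc, hag, hg'len]
                omega
            have hFv : F (w * FreeGroup.mk [ℓ]) = 1 := by
              rw [hF]; exact if_pos hcond
            rw [if_pos ⟨h1, h2⟩, hFv]
          · rw [if_neg h]; exact zero_le
        calc (∑' w : FreeGroup (Fin r),
            if (wlen w = n ∧ wlen (w * g) + 2*(c+1) = n + wlen g) then (1:ℝ≥0∞) else 0)
            ≤ ∑' w : FreeGroup (Fin r), F (w * FreeGroup.mk [ℓ]) := ENNReal.tsum_le_tsum key
          _ = ∑' v : FreeGroup (Fin r), F v := by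
              simpa using ((Equiv.mulRight (FreeGroup.mk [ℓ])).tsum_eq F)
          _ ≤ SbE r q ((n-1) - c) := ihc (n-1) (FreeGroup.mk T) (by omega)
          _ = SbE r q (n - (c+1)) := by congr 1; omega

end Count

lemma ind_mono {P Q : Prop} [Decidable P] [Decidable Q] (h : P → Q) :
    (if P then (1:ℝ≥0∞) else 0) ≤ (if Q then (1:ℝ≥0∞) else 0) := by
  by_cases hP : P
  · rw [if_pos hP, if_pos (h hP)]
  · rw [if_neg hP]; exact zero_le

section NatNum

lemma twoGeom (q : ℕ) (hq3 : 3 ≤ q) : ∀ m, 2 * (∑ k ∈ Finset.range m, q^k) ≤ q^m := by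
  intro m
  induction m with
  | zero => simp
  | succ m ih =>
    rw [Finset.sum_range_succ, Nat.mul_add, pow_succ']
    nlinarith [Nat.one_le_pow m q (by omega : 0 < q)]

lemma numN (i j n q r : ℕ) (hij : i ≤ j) (hjn : j ≤ n) (hq3 : 3 ≤ q) (hqr : q + 1 = 2*r) :
    (if i = 0 then 1 else 2*r*q^(i-1)) * (if n - j = 0 then 1 else 2*r*q^(n-j-1))
      ≤ 2 * q^(n - (j - i)) := by
  have h2r : 2*r = q+1 := hqr.symm
  by_cases hi : i = 0 <;> by_cases hj : n - j = 0
  · rw [if_pos hi, if_pos hj, one_mul]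
    exact le_trans (Nat.one_le_pow _ _ (by omega)) (Nat.le_mul_of_pos_left _ (by omega))
  · subst hi
    rw [if_pos rfl, if_neg hj, one_mul, h2r]
    rw [show n - (j - 0) = (n-j-1)+1 by omega, pow_succ', ← mul_assoc]
    exact Nat.mul_le_mul_right _ (by omega)
  · rw [if_neg hi, if_pos hj, mul_one, h2r]
    rw [show n - (j - i) = (i-1)+1 by omega, pow_succ', ← mul_assoc]
    exact Nat.mul_le_mul_right _ (by omega)
  · rw [if_neg hi, if_neg hj, h2r]
    rw [show n - (j - i) = (i-1)+((n-j-1)+2) by omega]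
    calc (q+1)*q^(i-1) * ((q+1)*q^(n-j-1))
        = ((q+1)*(q+1)) * (q^(i-1)*q^(n-j-1)) := by ring
      _ ≤ (2*(q*q)) * (q^(i-1)*q^(n-j-1)) := Nat.mul_le_mul_right _ (by nlinarith)
      _ = 2 * q^((i-1)+((n-j-1)+2)) := by
          rw [pow_add, pow_add, pow_two]; ring

lemma rowB (n q i : ℕ) (hq3 : 3 ≤ q) (hi : i ≤ n) :
    (∑ j ∈ Finset.range (n+1), 2 * q^(n - (max i j - min i j))) ≤ 4 * q^n := by
  rw [Finset.range_eq_Ico,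
    ← Finset.sum_Ico_consecutive _ (Nat.zero_le (i+1)) (by omega : i+1 ≤ n+1)]
  have part1 : (∑ j ∈ Finset.Ico 0 (i+1), 2 * q^(n - (max i j - min i j))) ≤ 3 * q^n := by
    rw [← Finset.range_eq_Ico]
    have hcg : ∀ j ∈ Finset.range (i+1),
        2 * q^(n - (max i j - min i j)) = 2 * (q^(n-i) * q^j) := by
      intro j hj
      have hj' : j ≤ i := by
        have := Finset.mem_range.1 hj; omega
      rw [max_eq_left hj', min_eq_right hj', show n - (i - j) = (n-i)+j by omega, pow_add]
    rw [Finset.sum_congr rfl hcg]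
    have : (∑ j ∈ Finset.range (i+1), 2 * (q^(n-i) * q^j))
        = q^(n-i) * (2 * ∑ j ∈ Finset.range (i+1), q^j) := by
      rw [Finset.mul_sum, Finset.mul_sum]
      exact Finset.sum_congr rfl fun j _ => by ring
    rw [this]
    have h1 : 2 * (∑ j ∈ Finset.range (i+1), q^j) ≤ 3 * q^i := by
      rw [Finset.sum_range_succ, Nat.mul_add]
      have := twoGeom q hq3 i
      omega
    calc q^(n-i) * (2 * ∑ j ∈ Finset.range (i+1), q^j)
        ≤ q^(n-i) * (3 * q^i) := Nat.mul_le_mul_left _ h1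
      _ = 3 * q^n := by
          rw [show (n:ℕ) = (n-i)+i by omega]
          rw [pow_add, show (n-i)+i - i = n - i by omega]
          ring
  have part2 : (∑ j ∈ Finset.Ico (i+1) (n+1), 2 * q^(n - (max i j - min i j))) ≤ q^n := by
    rw [Finset.sum_Ico_eq_sum_range]
    have hcg : ∀ k ∈ Finset.range (n+1-(i+1)),
        2 * q^(n - (max i (i+1+k) - min i (i+1+k))) = 2 * q^(n-1-k) := by
      intro k _
      have h1 : max i (i+1+k) = i+1+k := max_eq_right (by omega)
      have h2 : min i (i+1+k) = i := min_eq_left (by omega)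
      rw [h1, h2, show i+1+k-i = k+1 by omega, show n - (k+1) = n-1-k by omega]
    rw [Finset.sum_congr rfl hcg]
    calc (∑ k ∈ Finset.range (n+1-(i+1)), 2 * q^(n-1-k))
        ≤ ∑ k ∈ Finset.range n, 2 * q^(n-1-k) := by
          refine Finset.sum_le_sum_of_subset ?_
          intro k hk
          simp only [Finset.mem_range] at *
          omega
      _ = 2 * ∑ k ∈ Finset.range n, q^(n-1-k) := by rw [Finset.mul_sum]
      _ = 2 * ∑ k ∈ Finset.range n, q^k := by
          rw [Finset.sum_range_reflect (fun k => q^k) n]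
      _ ≤ q^n := twoGeom q hq3 n
  omega

end NatNum

section Main

open FreeGroup

variable (r q n : ℕ)

def cInd (j : ℕ) (x e : FreeGroup (Fin r)) : ℝ≥0∞ :=
  if (wlen (x * e⁻¹) = n ∧ wlen x + 2*j = wlen e + n) then 1 else 0

/-- an explicit equivalence `e ↦ x * e⁻¹`. -/
def mulInvEquiv (x : FreeGroup (Fin r)) : FreeGroup (Fin r) ≃ FreeGroup (Fin r) where
  toFun e := x * e⁻¹
  invFun y := y⁻¹ * x
  left_inv e := by simp
  right_inv y := by simp

lemma lemA (hq : q + 1 = 2*r) (j : ℕ) (hj : j ≤ n) (e : FreeGroup (Fin r)) :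
    (∑' x : FreeGroup (Fin r), cInd r n j x e) ≤ SbE r q (n - j) := by
  have heq : (∑' x : FreeGroup (Fin r), cInd r n j x e)
      = ∑' w : FreeGroup (Fin r), cInd r n j (w * e) e := by
    exact (((Equiv.mulRight e).tsum_eq (fun x => cInd r n j x e))).symm
  rw [heq]
  refine le_trans (ENNReal.tsum_le_tsum (fun w => ?_)) (lemK r q hq j n e hj)
  unfold cInd
  refine ind_mono fun hc => ?_
  obtain ⟨h1, h2⟩ := hc
  rw [mul_inv_cancel_right] at h1
  exact ⟨h1, by omega⟩

lemma lemB (hq : q + 1 = 2*r) (i : ℕ) (hi : i ≤ n) (x : FreeGroup (Fin r)) :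
    (∑' e : FreeGroup (Fin r), cInd r n i x e) ≤ SbE r q i := by
  have heq : (∑' e : FreeGroup (Fin r), cInd r n i x e)
      = ∑' w : FreeGroup (Fin r), cInd r n i x (w * x) := by
    exact (((Equiv.mulRight x).tsum_eq (fun e => cInd r n i x e))).symm
  rw [heq]
  have hle := lemK r q hq (n - i) n x (by omega)
  refine le_trans (le_trans (ENNReal.tsum_le_tsum (fun w => ?_)) hle) (le_of_eq ?_)
  · unfold cInd
    refine ind_mono fun hc => ?_
    obtain ⟨h1, h2⟩ := hc
    have hxw : x * (w * x)⁻¹ = w⁻¹ := by group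
    rw [hxw, SWT.wlen_inv] at h1
    exact ⟨h1, by omega⟩
  · congr 1
    omega

lemma decomp (x e : FreeGroup (Fin r)) :
    sphInd n (x * e⁻¹) = ∑ j ∈ Finset.range (n+1), cInd r n j x e := by
  by_cases h : wlen (x * e⁻¹) = n
  · have hxe : (x * e⁻¹) * e = x := by group
    obtain ⟨k, hk⟩ := SWT.parity (x * e⁻¹) e
    rw [hxe, h] at hk
    have htri : wlen e ≤ n + wlen x := by
      have h1 : wlen ((x * e⁻¹)⁻¹ * x) ≤ wlen (x * e⁻¹)⁻¹ + wlen x := SWT.wlen_mul_le _ _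
      have h2 : (x * e⁻¹)⁻¹ * x = e := by group
      rw [h2, SWT.wlen_inv, h] at h1
      exact h1
    have hkn : k ≤ n := by omega
    have hsum : ∀ j ∈ Finset.range (n+1),
        cInd r n j x e = if j = k then (1:ℝ≥0∞) else 0 := by
      intro j _
      unfold cInd
      refine if_congr ?_ rfl rfl
      constructor
      · rintro ⟨-, h2⟩; omega
      · rintro rfl; exact ⟨h, by omega⟩
    rw [Finset.sum_congr rfl hsum,
      Finset.sum_ite_eq' (Finset.range (n+1)) k (fun _ => (1:ℝ≥0∞)),
      if_pos (Finset.mem_range.2 (by omega))]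
    unfold sphInd
    rw [if_pos h]
  · have hz : ∀ j ∈ Finset.range (n+1), cInd r n j x e = 0 := by
      intro j _
      unfold cInd
      rw [if_neg (fun hc => h hc.1)]
    rw [Finset.sum_congr rfl hz, Finset.sum_const_zero]
    unfold sphInd
    rw [if_neg h]

lemma conv_eq (E : Finset (FreeGroup (Fin r))) (x : FreeGroup (Fin r)) :
    conv (sphInd n) (finInd E) x = ∑ e ∈ E, sphInd n (x * e⁻¹) := by
  unfold conv
  have h1 : (∑' y : FreeGroup (Fin r), sphInd n y * finInd E (y⁻¹ * x))
      = ∑' e : FreeGroup (Fin r), sphInd n (x * e⁻¹) * finInd E ((x * e⁻¹)⁻¹ * x) := by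
    exact ((mulInvEquiv r x).tsum_eq (fun y => sphInd n y * finInd E (y⁻¹ * x))).symm
  rw [h1]
  have h2 : ∀ e : FreeGroup (Fin r),
      sphInd n (x * e⁻¹) * finInd E ((x * e⁻¹)⁻¹ * x) = sphInd n (x * e⁻¹) * finInd E e := by
    intro e
    congr 1
    congr 1
    group
  rw [tsum_congr h2]
  rw [tsum_eq_sum (s := E) (fun e he => by unfold finInd; rw [if_neg he, mul_zero])]
  refine Finset.sum_congr rfl fun e he => ?_
  unfold finInd
  rw [if_pos he, mul_one]


variable {r q n} in
lemma SbE_cast (k : ℕ) :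
    SbE r q k = (((if k = 0 then 1 else 2*r*q^(k-1)) : ℕ) : ℝ≥0∞) := by
  by_cases hk : k = 0 <;> simp [SbE, hk] <;> push_cast <;> ring

def Uf (E : Finset (FreeGroup (Fin r))) (j : ℕ) (x : FreeGroup (Fin r)) : ℝ≥0∞ :=
  ∑ e ∈ E, cInd r n j x e

lemma keyPair (hq1 : q + 1 = 2*r) (hq3 : 3 ≤ q) (E : Finset (FreeGroup (Fin r)))
    (i j : ℕ) (hij : i ≤ j) (hjn : j ≤ n) :
    (∑' x : FreeGroup (Fin r), Uf r n E i x * Uf r n E j x)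
      ≤ (E.card : ℝ≥0∞) * ((2 * q^(n - (j - i)) : ℕ) : ℝ≥0∞) := by
  have hUle : ∀ x, Uf r n E i x ≤ SbE r q i := by
    intro x
    exact le_trans (ENNReal.sum_le_tsum E) (lemB r q n hq1 i (le_trans hij hjn) x)
  calc (∑' x : FreeGroup (Fin r), Uf r n E i x * Uf r n E j x)
      ≤ ∑' x : FreeGroup (Fin r), SbE r q i * Uf r n E j x :=
        ENNReal.tsum_le_tsum (fun x => mul_le_mul_left (hUle x) _)
    _ = SbE r q i * ∑' x : FreeGroup (Fin r), Uf r n E j x := ENNReal.tsum_mul_left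
    _ = SbE r q i * ∑ e ∈ E, ∑' x : FreeGroup (Fin r), cInd r n j x e := by
        unfold Uf
        rw [Summable.tsum_finsetSum (fun _ _ => ENNReal.summable)]
    _ ≤ SbE r q i * ∑ _e ∈ E, SbE r q (n - j) :=
        mul_le_mul_right (Finset.sum_le_sum fun e _ => lemA r q n hq1 j hjn e) _
    _ = (E.card : ℝ≥0∞) * (SbE r q i * SbE r q (n - j)) := by
        rw [Finset.sum_const, nsmul_eq_mul]
        ring
    _ ≤ (E.card : ℝ≥0∞) * ((2 * q^(n - (j - i)) : ℕ) : ℝ≥0∞) := by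
        refine mul_le_mul_right ?_ _
        rw [SbE_cast, SbE_cast, ← Nat.cast_mul]
        exact Nat.cast_le.2 (numN i j n q r hij hjn hq3 hq1)

lemma pairBound (hq1 : q + 1 = 2*r) (hq3 : 3 ≤ q) (E : Finset (FreeGroup (Fin r)))
    (i j : ℕ) (hi : i ≤ n) (hj : j ≤ n) :
    (∑' x : FreeGroup (Fin r), Uf r n E i x * Uf r n E j x)
      ≤ (E.card : ℝ≥0∞) * ((2 * q^(n - (max i j - min i j)) : ℕ) : ℝ≥0∞) := by
  rcases le_total i j with h | h
  · rw [max_eq_right h, min_eq_left h]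
    exact keyPair r q n hq1 hq3 E i j h hj
  · rw [max_eq_left h, min_eq_right h]
    have hcomm : ∀ x : FreeGroup (Fin r),
        Uf r n E i x * Uf r n E j x = Uf r n E j x * Uf r n E i x := fun x => mul_comm _ _
    rw [tsum_congr hcomm]
    exact keyPair r q n hq1 hq3 E j i h hi

end Main



end SWT


/-- Weak type `(2,2)` estimate for the convolution with a sphere indicator: for every
`n` and every finite `E`, `Σ_x ((χ_n ∗ χ_E)(x))² ≤ 4 (n+1) q^n |E|`. -/
theorem sphere_weak_type_two_two
    (r : ℕ) (hr : 2 ≤ r) (q : ℕ) (hq : q = 2 * r - 1)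
    (n : ℕ) (E : Finset (FreeGroup (Fin r))) :
    ∑' x : FreeGroup (Fin r), (conv (sphInd n) (finInd E) x) ^ 2
      ≤ 4 * (n + 1 : ℝ≥0∞) * (q : ℝ≥0∞) ^ n * (E.card : ℝ≥0∞) := by
  have hq1 : q + 1 = 2*r := by omega
  have hq3 : 3 ≤ q := by omega
  have hconv : ∀ x : FreeGroup (Fin r),
      conv (sphInd n) (finInd E) x = ∑ j ∈ Finset.range (n+1), SWT.Uf r n E j x := by
    intro x
    rw [SWT.conv_eq r n E x]
    rw [Finset.sum_congr rfl (fun e (_ : e ∈ E) => SWT.decomp r n x e)]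
    rw [Finset.sum_comm]
    rfl
  have hsq : ∀ x : FreeGroup (Fin r), (conv (sphInd n) (finInd E) x)^2
      = ∑ i ∈ Finset.range (n+1), ∑ j ∈ Finset.range (n+1),
          SWT.Uf r n E i x * SWT.Uf r n E j x := by
    intro x
    rw [hconv x, sq, Finset.sum_mul_sum]
  rw [tsum_congr hsq, Summable.tsum_finsetSum (fun _ _ => ENNReal.summable)]
  rw [Finset.sum_congr rfl (fun i (_ : i ∈ Finset.range (n+1)) =>
    Summable.tsum_finsetSum (f := fun j x => SWT.Uf r n E i x * SWT.Uf r n E j x)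
      (fun _ _ => ENNReal.summable))]
  calc (∑ i ∈ Finset.range (n+1), ∑ j ∈ Finset.range (n+1),
          ∑' x : FreeGroup (Fin r), SWT.Uf r n E i x * SWT.Uf r n E j x)
      ≤ ∑ i ∈ Finset.range (n+1), ∑ j ∈ Finset.range (n+1),
          (E.card : ℝ≥0∞) * ((2 * q^(n - (max i j - min i j)) : ℕ) : ℝ≥0∞) := by
        refine Finset.sum_le_sum fun i hi => Finset.sum_le_sum fun j hj => ?_
        exact SWT.pairBound r q n hq1 hq3 E i j
          (by have := Finset.mem_range.1 hi; omega)
          (by have := Finset.mem_range.1 hj; omega)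
    _ = (E.card : ℝ≥0∞) * ((∑ i ∈ Finset.range (n+1), ∑ j ∈ Finset.range (n+1),
          2 * q^(n - (max i j - min i j)) : ℕ) : ℝ≥0∞) := by
        rw [Nat.cast_sum, Finset.mul_sum]
        refine Finset.sum_congr rfl fun i _ => ?_
        rw [Nat.cast_sum, Finset.mul_sum]
    _ ≤ (E.card : ℝ≥0∞) * (((n+1) * (4 * q^n) : ℕ) : ℝ≥0∞) := by
        refine mul_le_mul_right (Nat.cast_le.2 ?_) _
        calc (∑ i ∈ Finset.range (n+1), ∑ j ∈ Finset.range (n+1),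
                2 * q^(n - (max i j - min i j)))
            ≤ ∑ _i ∈ Finset.range (n+1), 4 * q^n :=
              Finset.sum_le_sum fun i hi =>
                SWT.rowB n q i hq3 (Nat.lt_succ_iff.1 (Finset.mem_range.1 hi))
          _ = (n+1) * (4 * q^n) := by
              rw [Finset.sum_const, Finset.card_range, smul_eq_mul]
    _ = 4 * (n + 1 : ℝ≥0∞) * (q : ℝ≥0∞) ^ n * (E.card : ℝ≥0∞) := by
        push_cast
        ring
end
end
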